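/- arXiv:1507.08323 — 10 statements merged into one kernel-verified Lean document; each statement's English description precedes it below -/
import Mathlib

section
/- Let T = diag(λ₁, λ₂) be a 2×2 diagonal matrix over ℂ with λ₂ = conj(λ₁). Then T is not convex-cyclic on ℂ²: for every vector v, the set {p(T)v : p a convex-polynomial} is not dense in ℂ². -/
/-- A convex-polynomial: a convex combination of the monomials `1, z, z², …`. -/
def IsConvexPoly (p : Polynomial ℂ) : Prop :=
  ∃ (n : ℕ) (a : ℕ → ℝ), (∀ k, 0 ≤ a k) ∧ (∑ k ∈ Finset.range (n + 1), a k) = 1 ∧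
    p = ∑ k ∈ Finset.range (n + 1), Polynomial.C ((a k : ℂ)) * Polynomial.X ^ k


open Polynomial Matrix


open Polynomial Matrix

lemma mulVec_aeval_diagonal (d : Fin 2 → ℂ) (p : ℂ[X]) (v : Fin 2 → ℂ) (i : Fin 2) :
    (aeval (diagonal d) p).mulVec v i = aeval (d i) p * v i := by
  have h : diagonal ((aeval d) p) = aeval (diagonal d) p := by
    exact
      (Polynomial.aeval_algHom_apply (Matrix.diagonalAlgHom ℂ (n := Fin 2)) d p).symm
  have h2 : (aeval d) p i = aeval (d i) p :=
    (Polynomial.aeval_algHom_apply (Pi.evalAlgHom ℂ (fun _ => ℂ) i) d p).symm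
  rw [← h, Matrix.mulVec_diagonal, h2]

lemma aeval_conj_real (lam : ℂ) (n : ℕ) (a : ℕ → ℝ) :
    aeval (starRingEnd ℂ lam)
        (∑ k ∈ Finset.range (n + 1), Polynomial.C ((a k : ℂ)) * Polynomial.X ^ k)
      = starRingEnd ℂ (aeval lam
        (∑ k ∈ Finset.range (n + 1), Polynomial.C ((a k : ℂ)) * Polynomial.X ^ k)) := by
  simp [map_sum, _root_.map_mul, _root_.map_pow, Complex.conj_ofReal]

theorem diag_conj_pair_not_convexCyclic' (lam : ℂ)
    (T : Matrix (Fin 2) (Fin 2) ℂ)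
    (hT : T = Matrix.diagonal ![lam, starRingEnd ℂ lam]) :
    ∀ v : Fin 2 → ℂ,
      ¬ Dense {w : Fin 2 → ℂ |
          ∃ p, (∃ (n : ℕ) (a : ℕ → ℝ), (∀ k, 0 ≤ a k) ∧ (∑ k ∈ Finset.range (n + 1), a k) = 1 ∧
    p = ∑ k ∈ Finset.range (n + 1), Polynomial.C ((a k : ℂ)) * Polynomial.X ^ k) ∧ (Polynomial.aeval T p).mulVec v = w} := by
  intro v hdense
  subst hT
  set d : Fin 2 → ℂ := ![lam, starRingEnd ℂ lam] with hd
  -- key: every w in the set satisfies w 0 * conj (v 1) = conj (w 1) * v 0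
  have key : ∀ w ∈ {w : Fin 2 → ℂ |
      ∃ p, (∃ (n : ℕ) (a : ℕ → ℝ), (∀ k, 0 ≤ a k) ∧ (∑ k ∈ Finset.range (n + 1), a k) = 1 ∧
        p = ∑ k ∈ Finset.range (n + 1), Polynomial.C ((a k : ℂ)) * Polynomial.X ^ k) ∧
        (Polynomial.aeval (Matrix.diagonal d) p).mulVec v = w},
      w 0 * starRingEnd ℂ (v 1) = starRingEnd ℂ (w 1) * v 0 := by
    rintro w ⟨p, ⟨n, a, _, _, hp⟩, hw⟩
    have h0 : w 0 = aeval (d 0) p * v 0 := by rw [← hw]; exact mulVec_aeval_diagonal d p v 0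
    have h1 : w 1 = aeval (d 1) p * v 1 := by rw [← hw]; exact mulVec_aeval_diagonal d p v 1
    have hd0 : d 0 = lam := rfl
    have hd1 : d 1 = starRingEnd ℂ lam := rfl
    rw [h0, h1, hd0, hd1, hp, aeval_conj_real]
    simp only [_root_.map_mul, Complex.conj_conj]
    ring
  -- continuous function vanishing on a dense set vanishes everywhere
  have hzero : ∀ w : Fin 2 → ℂ,
      w 0 * starRingEnd ℂ (v 1) - starRingEnd ℂ (w 1) * v 0 = 0 := by
    intro w
    have hc : Continuous fun w : Fin 2 → ℂ =>
        w 0 * starRingEnd ℂ (v 1) - starRingEnd ℂ (w 1) * v 0 :=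
      (((continuous_apply 0).mul continuous_const).sub
        ((Complex.continuous_conj.comp (continuous_apply 1)).mul continuous_const))
    have heq : (fun w : Fin 2 → ℂ =>
        w 0 * starRingEnd ℂ (v 1) - starRingEnd ℂ (w 1) * v 0) = fun _ => 0 :=
      Continuous.ext_on hdense hc continuous_const
        (fun w hw => by simpa [sub_eq_zero] using key w hw)
    exact congrFun heq w
  -- also: the zero vector case — v itself is in the closure? derive v 0 = v 1 = 0 impossible? 
  -- Instead: derive contradiction by evaluating hzero at suitable w.
  by_cases h0 : v 0 = 0
  · by_cases h1 : v 1 = 0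
    · -- v = 0, so the set is ⊆ {0}, not dense
      have hv : v = 0 := by
        funext i; fin_cases i <;> assumption
      have := hdense.closure_eq
      have hmem : (fun _ : Fin 2 => (1 : ℂ)) ∈ closure {w : Fin 2 → ℂ |
          ∃ p, (∃ (n : ℕ) (a : ℕ → ℝ), (∀ k, 0 ≤ a k) ∧ (∑ k ∈ Finset.range (n + 1), a k) = 1 ∧
            p = ∑ k ∈ Finset.range (n + 1), Polynomial.C ((a k : ℂ)) * Polynomial.X ^ k) ∧
            (Polynomial.aeval (Matrix.diagonal d) p).mulVec v = w} := hdense _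
      have hsub : {w : Fin 2 → ℂ |
          ∃ p, (∃ (n : ℕ) (a : ℕ → ℝ), (∀ k, 0 ≤ a k) ∧ (∑ k ∈ Finset.range (n + 1), a k) = 1 ∧
            p = ∑ k ∈ Finset.range (n + 1), Polynomial.C ((a k : ℂ)) * Polynomial.X ^ k) ∧
            (Polynomial.aeval (Matrix.diagonal d) p).mulVec v = w} ⊆ {0} := by
        rintro w ⟨p, _, hw⟩
        simp only [Set.mem_singleton_iff, ← hw, hv, Matrix.mulVec_zero]
      have := closure_mono hsub hmem
      rw [closure_singleton] at this
      have : (1 : ℂ) = 0 := congrFun this 0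
      exact one_ne_zero this
    · have := hzero ![1, 0]
      simp [h0] at this
      exact h1 (by simpa using this)
  · have := hzero ![0, 1]
    simp [h0] at this

theorem diag_conj_pair_not_convexCyclic (lam : ℂ)
    (T : Matrix (Fin 2) (Fin 2) ℂ)
    (hT : T = Matrix.diagonal ![lam, starRingEnd ℂ lam]) :
    ∀ v : Fin 2 → ℂ,
      ¬ Dense {w : Fin 2 → ℂ |
          ∃ p, IsConvexPoly p ∧ (Polynomial.aeval T p).mulVec v = w} :=
  diag_conj_pair_not_convexCyclic' lam T hT
end

section
/- If T is a convex-cyclic continuous linear operator on a complex locally convex space X, then the adjoint T* has no eigenvalue that is real, and no eigenvalue in the closed unit disk. -/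
/-- If `T` is a convex-cyclic continuous linear operator on a complex locally convex space,
then no eigenvalue of `T*` is real or lies in the closed unit disk. -/
theorem adjoint_eigenvalue_not_real_not_in_disk
    {X : Type*} [AddCommGroup X] [Module ℂ X] [Module ℝ X] [IsScalarTower ℝ ℂ X]
    [TopologicalSpace X] [IsTopologicalAddGroup X] [ContinuousSMul ℂ X]
    [LocallyConvexSpace ℝ X]
    (T : X →L[ℂ] X)
    (hcc : ∃ x : X, Dense {y : X | ∃ p, IsConvexPoly p ∧ (Polynomial.aeval T) p x = y})
    (lam : ℂ) (f : X →L[ℂ] ℂ) (hf : f ≠ 0) (heig : ∀ x, f (T x) = lam * f x) :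
    lam.im ≠ 0 ∧ 1 < ‖lam‖ := by
  obtain ⟨x, hx⟩ := hcc
  set D : Set X := {y : X | ∃ p, IsConvexPoly p ∧ (Polynomial.aeval T) p x = y} with hD
  -- f is surjective
  obtain ⟨z, hz⟩ : ∃ z, f z ≠ 0 := by
    by_contra h
    push_neg at h
    exact hf (ContinuousLinearMap.ext fun y => by simp [h y])
  have hfs : Function.Surjective f := fun w =>
    ⟨(w / f z) • z, by simp [div_mul_cancel₀, hz]⟩
  -- powers
  have hpow : ∀ n : ℕ, ∀ y, f ((T ^ n) y) = lam ^ n * f y := by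
    intro n
    induction n with
    | zero => intro y; simp
    | succ n ih =>
      intro y
      have : (T ^ (n + 1)) y = (T ^ n) (T y) := by
        rw [pow_succ]; rfl
      rw [this, ih, heig, pow_succ]; ring
  -- key identity
  have key : ∀ p : Polynomial ℂ, ∀ y, f ((Polynomial.aeval T) p y) = p.eval lam * f y := by
    intro p
    induction p using Polynomial.induction_on' with
    | add p q hp hq =>
      intro y
      simp [map_add, hp y, hq y, add_mul]
    | monomial n c =>
      intro y
      simp only [Polynomial.aeval_monomial, Polynomial.eval_monomial]
      have : ((algebraMap ℂ (X →L[ℂ] X)) c * T ^ n) y = c • ((T ^ n) y) := by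
        simp [Algebra.algebraMap_eq_smul_one, mul_comm]
      rw [this, map_smul, hpow n y]
      simp [smul_eq_mul]; ring
  -- f '' D is dense
  have hfD : Dense (f '' D) := hfs.denseRange.dense_image f.continuous hx
  -- f x ≠ 0
  have hfx : f x ≠ 0 := by
    intro h0
    have hsub : f '' D ⊆ {0} := by
      rintro w ⟨y, ⟨p, _, rfl⟩, rfl⟩
      simp [key p x, h0]
    have : (1 : ℂ) ∈ closure (f '' D) := hfD 1
    have : (1 : ℂ) ∈ ({0} : Set ℂ) :=
      (closure_minimal hsub isClosed_singleton) this
    simp at this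
  -- the set of values p.eval lam is dense
  set S : Set ℂ := {w : ℂ | ∃ p, IsConvexPoly p ∧ p.eval lam = w} with hS
  have hSdense : Dense S := by
    have hgs : Function.Surjective (fun w : ℂ => w / f x) := fun w =>
      ⟨w * f x, by field_simp⟩
    have hgc : Continuous (fun w : ℂ => w / f x) := by
      exact continuous_id.div_const (f x)
    have hdense2 : Dense ((fun w : ℂ => w / f x) '' (f '' D)) :=
      hgs.denseRange.dense_image hgc hfD
    refine hdense2.mono ?_
    rintro w ⟨v, ⟨y, ⟨p, hpc, rfl⟩, rfl⟩, rfl⟩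
    exact ⟨p, hpc, by rw [key p x]; field_simp⟩
  constructor
  · -- lam is not real
    intro him
    have hl : lam = ((lam.re : ℝ) : ℂ) := by
      apply Complex.ext <;> simp [him]
    have hsub : S ⊆ {w : ℂ | w.im = 0} := by
      rintro w ⟨p, ⟨n, a, ha, hsum, hp⟩, rfl⟩
      have : p.eval lam =
          ((∑ k ∈ Finset.range (n + 1), a k * lam.re ^ k : ℝ) : ℂ) := by
        rw [hp]
        simp only [Polynomial.eval_finset_sum, Polynomial.eval_mul,
          Polynomial.eval_C, Polynomial.eval_pow, Polynomial.eval_X]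
        rw [hl]
        push_cast
        rfl
      rw [Set.mem_setOf_eq, this, Complex.ofReal_im]
    have hclosed : IsClosed {w : ℂ | w.im = 0} :=
      isClosed_eq Complex.continuous_im continuous_const
    have : Complex.I ∈ {w : ℂ | w.im = 0} :=
      (closure_minimal hsub hclosed) (hSdense Complex.I)
    simp at this
  · -- |lam| > 1
    by_contra h
    push_neg at h
    have hsub : S ⊆ Metric.closedBall (0 : ℂ) 1 := by
      rintro w ⟨p, ⟨n, a, ha, hsum, hp⟩, rfl⟩
      rw [Metric.mem_closedBall, dist_zero_right]
      have h1 : p.eval lam = ∑ k ∈ Finset.range (n + 1), (a k : ℂ) * lam ^ k := by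
        rw [hp]
        simp [Polynomial.eval_finset_sum]
      rw [h1]
      calc ‖∑ k ∈ Finset.range (n + 1), (a k : ℂ) * lam ^ k‖
          ≤ ∑ k ∈ Finset.range (n + 1), ‖(a k : ℂ) * lam ^ k‖ :=
            norm_sum_le _ _
        _ ≤ ∑ k ∈ Finset.range (n + 1), a k := by
            apply Finset.sum_le_sum
            intro k _
            rw [norm_mul, norm_pow, Complex.norm_real, Real.norm_eq_abs, abs_of_nonneg (ha k)]
            calc a k * ‖lam‖ ^ k ≤ a k * 1 := by
                  apply mul_le_mul_of_nonneg_left _ (ha k)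
                  exact pow_le_one₀ (norm_nonneg lam) h
              _ = a k := mul_one _
        _ = 1 := hsum
    have hclosed : IsClosed (Metric.closedBall (0 : ℂ) 1) := Metric.isClosed_closedBall
    have h2 : (2 : ℂ) ∈ Metric.closedBall (0 : ℂ) 1 :=
      (closure_minimal hsub hclosed) (hSdense 2)
    rw [Metric.mem_closedBall, dist_zero_right] at h2
    norm_num at h2
end

section
/- If T is a convex-cyclic continuous linear operator on a complex locally convex space X and λ₁, λ₂ are eigenvalues of T*, then λ₂ ≠ conj(λ₁). -/
private lemma pow_apply_eig {X : Type*} [AddCommGroup X] [Module ℂ X]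
    [TopologicalSpace X] [IsTopologicalAddGroup X] [ContinuousSMul ℂ X]
    (T : X →L[ℂ] X) (f : X →L[ℂ] ℂ) (lam : ℂ) (h : ∀ x, f (T x) = lam * f x)
    (x : X) (k : ℕ) : f ((T ^ k) x) = lam ^ k * f x := by
  induction k with
  | zero => simp
  | succ n ih =>
      rw [pow_succ', ContinuousLinearMap.mul_apply, h, ih]
      ring

private lemma aeval_apply_eig {X : Type*} [AddCommGroup X] [Module ℂ X]
    [TopologicalSpace X] [IsTopologicalAddGroup X] [ContinuousSMul ℂ X]
    (T : X →L[ℂ] X) (f : X →L[ℂ] ℂ) (lam : ℂ) (h : ∀ x, f (T x) = lam * f x)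
    (x : X) (p : Polynomial ℂ) :
    f ((Polynomial.aeval T) p x) = p.eval lam * f x := by
  rw [Polynomial.aeval_eq_sum_range, Polynomial.eval_eq_sum_range]
  simp only [ContinuousLinearMap.coe_sum', Finset.sum_apply,
    ContinuousLinearMap.coe_smul', Pi.smul_apply, map_sum, map_smul,
    pow_apply_eig T f lam h, smul_eq_mul, Finset.sum_mul]
  exact Finset.sum_congr rfl (fun i _ => by ring)

private lemma conj_eval_convex (p : Polynomial ℂ) (hp : IsConvexPoly p) (z : ℂ) :
    (starRingEnd ℂ) (p.eval z) = p.eval ((starRingEnd ℂ) z) := by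
  obtain ⟨n, a, -, -, rfl⟩ := hp
  simp [Polynomial.eval_finset_sum, map_sum, map_mul, map_pow, Complex.conj_ofReal]

/-- If `T` is convex-cyclic and `λ₁, λ₂` are eigenvalues of `T*`, then `λ₂ ≠ conj λ₁`. -/
theorem adjoint_eigenvalues_not_conjugate
    {X : Type*} [AddCommGroup X] [Module ℂ X] [Module ℝ X] [IsScalarTower ℝ ℂ X]
    [TopologicalSpace X] [IsTopologicalAddGroup X] [ContinuousSMul ℂ X]
    [LocallyConvexSpace ℝ X]
    (T : X →L[ℂ] X)
    (hcc : ∃ x : X, Dense {y : X | ∃ p, IsConvexPoly p ∧ (Polynomial.aeval T) p x = y})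
    (lam₁ lam₂ : ℂ)
    (f₁ : X →L[ℂ] ℂ) (hf₁ : f₁ ≠ 0) (heig₁ : ∀ x, f₁ (T x) = lam₁ * f₁ x)
    (f₂ : X →L[ℂ] ℂ) (hf₂ : f₂ ≠ 0) (heig₂ : ∀ x, f₂ (T x) = lam₂ * f₂ x) :
    lam₂ ≠ starRingEnd ℂ lam₁ := by
  intro heq
  obtain ⟨x, hd⟩ := hcc
  set O : Set X := {y : X | ∃ p, IsConvexPoly p ∧ (Polynomial.aeval T) p x = y} with hO
  -- a general density lemma
  have dense_zero : ∀ (f : X →L[ℂ] ℂ) (lam : ℂ), (∀ y, f (T y) = lam * f y) →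
      f x = 0 → f = 0 := by
    intro f lam heig hfx
    have hsub : O ⊆ {y : X | f y = 0} := by
      rintro y ⟨p, -, rfl⟩
      simp [aeval_apply_eig T f lam heig, hfx]
    have hclosed : IsClosed {y : X | f y = 0} := isClosed_eq f.continuous continuous_const
    have huniv : (Set.univ : Set X) ⊆ {y : X | f y = 0} := by
      rw [← hd.closure_eq]
      exact closure_minimal hsub hclosed
    ext y
    exact huniv (Set.mem_univ y)
  have hf₁x : f₁ x ≠ 0 := fun h => hf₁ (dense_zero f₁ lam₁ heig₁ h)
  have hf₂x : f₂ x ≠ 0 := fun h => hf₂ (dense_zero f₂ lam₂ heig₂ h)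
  -- the key continuous function vanishing on the orbit
  have hsub : O ⊆ {y : X | (starRingEnd ℂ) (f₁ y) * f₂ x - (starRingEnd ℂ) (f₁ x) * f₂ y = 0} := by
    rintro y ⟨p, hp, rfl⟩
    have h1 : f₁ ((Polynomial.aeval T) p x) = p.eval lam₁ * f₁ x :=
      aeval_apply_eig T f₁ lam₁ heig₁ x p
    have h2 : f₂ ((Polynomial.aeval T) p x) = p.eval lam₂ * f₂ x :=
      aeval_apply_eig T f₂ lam₂ heig₂ x p
    have h3 : (starRingEnd ℂ) (p.eval lam₁) = p.eval lam₂ := by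
      rw [conj_eval_convex p hp, ← heq]
    simp only [Set.mem_setOf_eq, h1, h2, map_mul, h3]
    ring
  have hclosed : IsClosed {y : X |
      (starRingEnd ℂ) (f₁ y) * f₂ x - (starRingEnd ℂ) (f₁ x) * f₂ y = 0} := by
    apply isClosed_eq _ continuous_const
    exact ((Complex.continuous_conj.comp f₁.continuous).mul continuous_const).sub
      (continuous_const.mul f₂.continuous)
  have hall : ∀ y, (starRingEnd ℂ) (f₁ y) * f₂ x - (starRingEnd ℂ) (f₁ x) * f₂ y = 0 := by
    intro y
    have huniv : (Set.univ : Set X) ⊆ {y : X |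
        (starRingEnd ℂ) (f₁ y) * f₂ x - (starRingEnd ℂ) (f₁ x) * f₂ y = 0} := by
      rw [← hd.closure_eq]
      exact closure_minimal hsub hclosed
    exact huniv (Set.mem_univ y)
  -- evaluate at `I • x`
  have h1 := hall (Complex.I • x)
  simp only [map_smul, smul_eq_mul, map_mul, Complex.conj_I] at h1
  have : (-Complex.I - Complex.I) * ((starRingEnd ℂ) (f₁ x) * f₂ x) = 0 := by
    linear_combination h1
  have hI : (-Complex.I - Complex.I) ≠ 0 := by
    intro h
    exact Complex.I_ne_zero (by linear_combination -h/2)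
  rcases mul_eq_zero.mp this with h | h
  · exact hI h
  · rcases mul_eq_zero.mp h with h' | h'
    · exact hf₁x (by simpa using congrArg (starRingEnd ℂ) h')
    · exact hf₂x h'
end

section
/- Let X be a locally convex space, T : X → X a continuous linear operator, and x ∈ X. Then the convex hull of the orbit {Tⁿx : n ≥ 0} is dense in X if and only if for every nonzero continuous linear functional f on X, sup_{n ≥ 0} Re(f(Tⁿx)) = +∞. -/
/-- Hahn–Banach characterization of convex-cyclic vectors: the convex hull of the
orbit of `x` under `T` is dense iff `sup_n Re (f (Tⁿ x)) = ∞` for every nonzero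
continuous linear functional `f`. -/
theorem convexHull_orbit_dense_iff
    {𝕜 X : Type*} [RCLike 𝕜] [AddCommGroup X] [Module 𝕜 X] [Module ℝ X]
    [IsScalarTower ℝ 𝕜 X] [TopologicalSpace X] [IsTopologicalAddGroup X]
    [ContinuousSMul 𝕜 X] [LocallyConvexSpace ℝ X]
    (T : X →L[𝕜] X) (x : X) :
    Dense (convexHull ℝ (Set.range fun n : ℕ => (T ^ n) x)) ↔
      ∀ f : X →L[𝕜] 𝕜, f ≠ 0 → ∀ M : ℝ, ∃ n : ℕ, M < RCLike.re (f ((T ^ n) x)) := by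
  haveI : ContinuousSMul ℝ X := IsScalarTower.continuousSMul 𝕜
  constructor
  · intro hd f hf M
    by_contra h
    push_neg at h
    -- the closed half-space {y | re (f y) ≤ M} contains the convex hull, hence all of X
    set C : Set X := {y | RCLike.re (f y) ≤ M} with hC
    have hconv : Convex ℝ C := by
      have : C = (RCLike.reCLM.comp ((f.restrictScalars ℝ).comp
          (ContinuousLinearMap.id ℝ X))) ⁻¹' Set.Iic M := by
        ext y; simp [hC]
      rw [this]
      exact (convex_Iic M).linear_preimage _
    have hclosed : IsClosed C := by
      have : C = (fun y => RCLike.re (f y)) ⁻¹' Set.Iic M := rfl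
      rw [this]
      exact isClosed_Iic.preimage (RCLike.continuous_re.comp f.continuous)
    have horb : Set.range (fun n : ℕ => (T ^ n) x) ⊆ C := by
      rintro _ ⟨n, rfl⟩; exact h n
    have hhull : convexHull ℝ (Set.range fun n : ℕ => (T ^ n) x) ⊆ C :=
      convexHull_min horb hconv
    have hall : (Set.univ : Set X) ⊆ C := by
      have := closure_minimal hhull hclosed
      rwa [hd.closure_eq] at this
    -- but f ≠ 0 gives a point with large real part
    obtain ⟨y, hy⟩ : ∃ y, f y ≠ 0 := by
      by_contra hy; push_neg at hy
      exact hf (ContinuousLinearMap.ext fun y => by simp [hy y])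
    have hpos : (0 : ℝ) < RCLike.re ((starRingEnd 𝕜) (f y) * f y) := by
      rw [RCLike.conj_mul, ← RCLike.ofReal_pow, RCLike.ofReal_re]
      exact pow_pos (norm_pos_iff.mpr hy) 2
    obtain ⟨t, ht⟩ : ∃ t : ℝ, M < t * RCLike.re ((starRingEnd 𝕜) (f y) * f y) := by
      refine ⟨(M + 1) / RCLike.re ((starRingEnd 𝕜) (f y) * f y), ?_⟩
      rw [div_mul_cancel₀ _ (ne_of_gt hpos)]
      linarith
    have : RCLike.re (f (((t : 𝕜) * (starRingEnd 𝕜) (f y)) • y)) ≤ M :=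
      hall (Set.mem_univ _)
    rw [map_smul, smul_eq_mul, mul_assoc] at this
    have : RCLike.re ((t : 𝕜) * ((starRingEnd 𝕜) (f y) * f y)) =
        t * RCLike.re ((starRingEnd 𝕜) (f y) * f y) := by
      rw [RCLike.re_ofReal_mul]
    linarith [hall (Set.mem_univ (((t : 𝕜) * (starRingEnd 𝕜) (f y)) • y)), this,
      (by rw [map_smul, smul_eq_mul, mul_assoc] :
        RCLike.re (f (((t : 𝕜) * (starRingEnd 𝕜) (f y)) • y)) =
          RCLike.re ((t : 𝕜) * ((starRingEnd 𝕜) (f y) * f y)))]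
  · intro h
    by_contra hd
    rw [dense_iff_closure_eq] at hd
    obtain ⟨z, hz⟩ : ∃ z, z ∉ closure (convexHull ℝ (Set.range fun n : ℕ => (T ^ n) x)) := by
      by_contra hz; push_neg at hz
      exact hd (Set.eq_univ_of_forall hz)
    obtain ⟨g, u, hgs, hgz⟩ := geometric_hahn_banach_closed_point
      ((convex_convexHull ℝ _).closure) isClosed_closure hz
    -- extend g to a 𝕜-linear functional
    set f : X →L[𝕜] 𝕜 :=
      { toLinearMap := LinearMap.extendTo𝕜' (g : X →ₗ[ℝ] ℝ)
        cont := by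
          have : Continuous fun y : X => ((g y : 𝕜) - (RCLike.I : 𝕜) * g ((RCLike.I : 𝕜) • y)) := by
            fun_prop
          exact this } with hfdef
    have hre : ∀ y : X, RCLike.re (f y) = g y := fun y =>
      LinearMap.extendTo𝕜'_apply_re (g : X →ₗ[ℝ] ℝ) y
    have hf : f ≠ 0 := by
      intro h0
      have hg0 : ∀ y, g y = 0 := fun y => by rw [← hre y, h0]; simp
      have h1 := hgs _ (subset_closure (subset_convexHull ℝ _ ⟨0, rfl⟩))
      rw [hg0] at h1
      rw [hg0] at hgz
      linarith
    obtain ⟨n, hn⟩ := h f hf u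
    have := hgs _ (subset_closure (subset_convexHull ℝ _ ⟨n, rfl⟩))
    rw [hre] at hn
    linarith
end

section
/- Let T₁ and T₂ be continuous convex-cyclic linear operators on locally convex spaces X₁ and X₂. If there exists a convex-polynomial p₀ such that p₀(T₁) is convex-cyclic and p₀(T₂) is power bounded, then T₁ ⊕ T₂ is convex-cyclic on X₁ ⊕ X₂. Moreover, if u₁ is a convex-cyclic vector for p₀(T₁) and u₂ is a convex-cyclic vector for T₂, then (u₁, u₂) is a convex-cyclic vector for T₁ ⊕ T₂. -/
set_option linter.unusedSectionVars false
set_option maxHeartbeats 1000000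

open Finset Bornology Filter Topology Pointwise

/-! ### Auxiliary machinery on convex weight sequences -/

def GoodW (a : ℕ → ℝ) (n : ℕ) : Prop :=
  (∀ k, 0 ≤ a k) ∧ (∑ k ∈ range (n+1), a k) = 1 ∧ ∀ k, n < k → a k = 0

def mulW (a b : ℕ → ℝ) (n m : ℕ) : ℕ → ℝ := fun l =>
  ∑ k ∈ range (n+1), ∑ j ∈ range (m+1), if k + j = l then a k * b j else 0

def oneW : ℕ → ℝ := fun k => if k = 0 then 1 else 0

noncomputable def powW (a : ℕ → ℝ) (n : ℕ) : ℕ → (ℕ → ℝ) :=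
  fun m => Nat.rec oneW (fun m' ih => mulW a ih n (n * m')) m

lemma powW_zero (a : ℕ → ℝ) (n : ℕ) : powW a n 0 = oneW := rfl
lemma powW_succ (a : ℕ → ℝ) (n m : ℕ) : powW a n (m+1) = mulW a (powW a n m) n (n*m) := rfl

lemma sum_mulW (a b : ℕ → ℝ) (n m : ℕ) :
    ∑ l ∈ range (n+m+1), mulW a b n m l
      = (∑ k ∈ range (n+1), a k) * (∑ j ∈ range (m+1), b j) := by
  simp only [mulW]
  rw [Finset.sum_comm]
  rw [Finset.sum_mul_sum]
  refine Finset.sum_congr rfl fun k hk => ?_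
  rw [Finset.sum_comm]
  refine Finset.sum_congr rfl fun j hj => ?_
  rw [Finset.sum_ite_eq]
  rw [if_pos]
  simp only [mem_range] at hk hj ⊢
  omega

lemma GoodW.mulW {a b : ℕ → ℝ} {n m : ℕ} (ha : GoodW a n) (hb : GoodW b m) :
    GoodW (mulW a b n m) (n + m) := by
  obtain ⟨ha0, ha1, _⟩ := ha
  obtain ⟨hb0, hb1, _⟩ := hb
  refine ⟨fun l => ?_, ?_, fun l hl => ?_⟩
  · exact Finset.sum_nonneg fun k _ => Finset.sum_nonneg fun j _ => by
      split <;> [exact mul_nonneg (ha0 k) (hb0 j); rfl]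
  · rw [sum_mulW, ha1, hb1, one_mul]
  · refine Finset.sum_eq_zero fun k hk => Finset.sum_eq_zero fun j hj => ?_
    rw [if_neg]
    simp only [mem_range] at hk hj
    omega

lemma GoodW.oneW : GoodW oneW 0 := by
  refine ⟨fun k => ?_, by simp [_root_.oneW], fun k hk => ?_⟩
  · simp only [_root_.oneW]; split <;> norm_num
  · simp only [_root_.oneW]; rw [if_neg]; omega

lemma GoodW.powW {a : ℕ → ℝ} {n : ℕ} (ha : GoodW a n) (m : ℕ) :
    GoodW (powW a n m) (n*m) := by
  induction m with
  | zero => simpa [powW_zero] using GoodW.oneW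
  | succ m ih =>
      rw [powW_succ, show n*(m+1) = n + n*m by ring]
      exact ha.mulW ih

lemma sum_extend {a : ℕ → ℝ} {n : ℕ} (h : ∀ k, n < k → a k = 0)
    {N : ℕ} (hn : n ≤ N) : ∑ k ∈ range (N+1), a k = ∑ k ∈ range (n+1), a k := by
  refine (Finset.sum_subset (by intro x; simp only [mem_range]; omega) ?_).symm
  intro k _ hk
  simp only [mem_range, not_lt] at hk
  exact h k (by omega)

/-! ### Convex hull lemmas -/

section hull
variable {E : Type*} [AddCommGroup E] [Module ℝ E]

lemma sum_extend_vec {a : ℕ → ℝ} {n : ℕ} (h : ∀ k, n < k → a k = 0)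
    {N : ℕ} (hn : n ≤ N) (f : ℕ → E) :
    ∑ k ∈ range (N+1), a k • f k = ∑ k ∈ range (n+1), a k • f k := by
  refine (Finset.sum_subset (by intro x; simp only [mem_range]; omega) ?_).symm
  intro k _ hk
  simp only [mem_range, not_lt] at hk
  rw [h k (by omega), zero_smul]

lemma sum_mem_convexHull {f : ℕ → E} {a : ℕ → ℝ} {N : ℕ}
    (h0 : ∀ k, 0 ≤ a k) (h1 : ∑ k ∈ range (N+1), a k = 1) :
    ∑ k ∈ range (N+1), a k • f k ∈ convexHull ℝ (Set.range f) :=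
  (convex_convexHull ℝ _).sum_mem (fun i _ => h0 i) h1
    (fun i _ => subset_convexHull ℝ _ (Set.mem_range_self i))

lemma exists_goodW_of_mem_convexHull {f : ℕ → E} {z : E}
    (hz : z ∈ convexHull ℝ (Set.range f)) :
    ∃ (a : ℕ → ℝ) (N : ℕ), GoodW a N ∧ z = ∑ k ∈ range (N+1), a k • f k := by
  rw [_root_.convexHull_eq] at hz
  obtain ⟨ι, t, w, zf, hw0, hw1, hzf, hz⟩ := hz
  have hg : ∀ i, ∃ k, i ∈ t → f k = zf i := by
    intro i
    by_cases hi : i ∈ t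
    · obtain ⟨k, hk⟩ := hzf i hi
      exact ⟨k, fun _ => hk⟩
    · exact ⟨0, fun h => absurd h hi⟩
  choose g hgf using hg
  set N := t.sup g with hN
  have hmaps : ∀ i ∈ t, g i ∈ range (N+1) := fun i hi => by
    simp only [mem_range]
    exact Nat.lt_succ_of_le (Finset.le_sup hi)
  refine ⟨fun m => if m ∈ range (N+1) then ∑ i ∈ t with g i = m, w i else 0, N,
    ⟨fun m => ?_, ?_, fun m hm => ?_⟩, ?_⟩
  · dsimp only
    split
    · exact Finset.sum_nonneg fun i _ => hw0 i (Finset.mem_filter.mp ‹_›).1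
    · rfl
  · dsimp only
    rw [Finset.sum_congr rfl fun m hm => if_pos hm,
      Finset.sum_fiberwise_of_maps_to hmaps, hw1]
  · dsimp only
    rw [if_neg]; simp only [mem_range]; omega
  · dsimp only
    rw [← hz, Finset.centerMass_eq_of_sum_1 _ _ hw1]
    rw [Finset.sum_congr rfl fun m hm => (by rw [if_pos hm] :
      (if m ∈ range (N+1) then ∑ i ∈ t with g i = m, w i else 0) • f m
        = (∑ i ∈ t with g i = m, w i) • f m)]
    rw [← Finset.sum_fiberwise_of_maps_to hmaps (fun i => w i • zf i)]
    refine Finset.sum_congr rfl fun m hm => ?_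
    rw [Finset.sum_smul]
    refine Finset.sum_congr rfl fun i hi => ?_
    obtain ⟨hit, hgi⟩ := Finset.mem_filter.mp hi
    rw [← hgi, hgf i hit]

lemma prod_sum_eq {F : Type*} [AddCommGroup F] (s : Finset ℕ) (g : ℕ → E) (h : ℕ → F) :
    ∑ l ∈ s, (g l, h l) = (∑ l ∈ s, g l, ∑ l ∈ s, h l) := by
  induction s using Finset.cons_induction with
  | empty => simp; rfl
  | cons i s hi ih =>
      rw [Finset.sum_cons, Finset.sum_cons, Finset.sum_cons, ih]
      rfl

end hull

/-! ### Operator-valued convex combinations -/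

section op
variable {𝕜 : Type*} [RCLike 𝕜] {X : Type*} [AddCommGroup X] [Module 𝕜 X] [Module ℝ X]
  [IsScalarTower ℝ 𝕜 X] [TopologicalSpace X] [IsTopologicalAddGroup X] [ContinuousSMul 𝕜 X]

lemma realSmul (r : ℝ) (x : X) : ((r : 𝕜)) • x = r • x := by
  rw [RCLike.real_smul_eq_coe_smul (K := 𝕜)]

noncomputable def wSum (T : X →L[𝕜] X) (a : ℕ → ℝ) (n : ℕ) : X →L[𝕜] X :=
  ∑ k ∈ range (n+1), ((a k : 𝕜)) • T ^ k

lemma wSum_apply (T : X →L[𝕜] X) (a : ℕ → ℝ) (n : ℕ) (x : X) :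
    wSum T a n x = ∑ k ∈ range (n+1), a k • (T ^ k) x := by
  simp [wSum, ContinuousLinearMap.sum_apply, realSmul]

lemma wSum_one (T : X →L[𝕜] X) : wSum T oneW 0 = 1 := by
  simp [wSum, oneW]

lemma wSum_extend (T : X →L[𝕜] X) {a : ℕ → ℝ} {n : ℕ} (h : ∀ k, n < k → a k = 0)
    {N : ℕ} (hn : n ≤ N) : wSum T a N = wSum T a n := by
  refine (Finset.sum_subset (by intro x; simp only [mem_range]; omega) ?_).symm
  intro k _ hk
  simp only [mem_range, not_lt] at hk
  rw [h k (by omega)]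
  simp

lemma wSum_mul (T : X →L[𝕜] X) (a b : ℕ → ℝ) (n m : ℕ) :
    wSum T a n * wSum T b m = wSum T (mulW a b n m) (n+m) := by
  have hR : ∀ l, (((mulW a b n m l : ℝ)) : 𝕜) • T ^ l
      = ∑ k ∈ range (n+1), ∑ j ∈ range (m+1),
          if k + j = l then (((a k * b j : ℝ)) : 𝕜) • T ^ l else 0 := by
    intro l
    simp only [mulW]
    push_cast
    rw [Finset.sum_smul]
    refine Finset.sum_congr rfl fun k _ => ?_
    rw [Finset.sum_smul]
    refine Finset.sum_congr rfl fun j _ => ?_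
    split <;> simp
  symm
  calc ∑ l ∈ range (n+m+1), ((mulW a b n m l : ℝ) : 𝕜) • T ^ l
      = ∑ l ∈ range (n+m+1), ∑ k ∈ range (n+1), ∑ j ∈ range (m+1),
          if k + j = l then (((a k * b j : ℝ)) : 𝕜) • T ^ l else 0 :=
        Finset.sum_congr rfl fun l _ => hR l
    _ = ∑ k ∈ range (n+1), ∑ l ∈ range (n+m+1), ∑ j ∈ range (m+1),
          if k + j = l then (((a k * b j : ℝ)) : 𝕜) • T ^ l else 0 := Finset.sum_comm
    _ = ∑ k ∈ range (n+1), ∑ j ∈ range (m+1), ∑ l ∈ range (n+m+1),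
          if k + j = l then (((a k * b j : ℝ)) : 𝕜) • T ^ l else 0 :=
        Finset.sum_congr rfl fun k _ => Finset.sum_comm
    _ = ∑ k ∈ range (n+1), ∑ j ∈ range (m+1), ((a k : 𝕜)) • T ^ k * ((b j : 𝕜)) • T ^ j := by
        refine Finset.sum_congr rfl fun k hk => Finset.sum_congr rfl fun j hj => ?_
        rw [Finset.sum_ite_eq, if_pos, smul_mul_smul_comm, ← pow_add]
        · push_cast; ring_nf
        · simp only [mem_range] at hk hj ⊢; omega
    _ = wSum T a n * wSum T b m := by rw [wSum, wSum, Finset.sum_mul_sum]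

lemma wSum_pow (T : X →L[𝕜] X) {a : ℕ → ℝ} {n : ℕ} (m : ℕ) :
    wSum T (powW a n m) (n*m) = (wSum T a n) ^ m := by
  induction m with
  | zero => simpa [powW_zero] using wSum_one T
  | succ m ih =>
      rw [pow_succ', ← ih, wSum_mul, ← powW_succ, show n*(m+1) = n + n*m by ring]

lemma wSum_combW (T : X →L[𝕜] X) {e : ℕ → ℝ} {n₀ : ℕ} (he : GoodW e n₀)
    (a : ℕ → ℝ) (m₁ : ℕ) {N : ℕ} (hN : n₀ * m₁ ≤ N) :
    wSum T (fun l => ∑ k ∈ range (m₁+1), a k * powW e n₀ k l) N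
      = ∑ k ∈ range (m₁+1), ((a k : 𝕜)) • (wSum T e n₀)^k := by
  calc wSum T (fun l => ∑ k ∈ range (m₁+1), a k * powW e n₀ k l) N
      = ∑ l ∈ range (N+1), ∑ k ∈ range (m₁+1),
          (((a k : 𝕜)) * ((powW e n₀ k l : ℝ) : 𝕜)) • T^l := by
        unfold wSum
        refine Finset.sum_congr rfl fun l _ => ?_
        push_cast
        rw [Finset.sum_smul]
    _ = ∑ k ∈ range (m₁+1), ∑ l ∈ range (N+1),
          (((a k : 𝕜)) * ((powW e n₀ k l : ℝ) : 𝕜)) • T^l := Finset.sum_comm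
    _ = ∑ k ∈ range (m₁+1), ((a k : 𝕜)) • wSum T (powW e n₀ k) N := by
        refine Finset.sum_congr rfl fun k _ => ?_
        rw [wSum, Finset.smul_sum]
        exact Finset.sum_congr rfl fun l _ => (mul_smul _ _ _)
    _ = ∑ k ∈ range (m₁+1), ((a k : 𝕜)) • (wSum T e n₀)^k := by
        refine Finset.sum_congr rfl fun k hk => ?_
        simp only [mem_range] at hk
        have hk' : n₀ * k ≤ N :=
          le_trans (Nat.mul_le_mul_left n₀ (by omega)) hN
        rw [wSum_extend T (he.powW k).2.2 hk', wSum_pow]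

lemma key_comp (T : X →L[𝕜] X) (x : X) {e : ℕ → ℝ} {n₀ : ℕ} (he : GoodW e n₀)
    {b : ℕ → ℝ} {m₂ : ℕ} (hb : ∀ k, m₂ < k → b k = 0)
    (a : ℕ → ℝ) (m₁ : ℕ) (t : ℝ) {N : ℕ} (hN₁ : m₂ ≤ N) (hN₂ : n₀ * m₁ ≤ N) :
    ∑ l ∈ range (N+1),
        ((1-t) * b l + t * (∑ k ∈ range (m₁+1), a k * powW e n₀ k l)) • (T^l) x
      = (1-t) • (∑ j ∈ range (m₂+1), b j • (T^j) x)
        + t • (∑ k ∈ range (m₁+1), a k • ((wSum T e n₀)^k) x) := by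
  have hsplit : ∑ l ∈ range (N+1),
      ((1-t) * b l + t * (∑ k ∈ range (m₁+1), a k * powW e n₀ k l)) • (T^l) x
      = (1-t) • (∑ l ∈ range (N+1), b l • (T^l) x)
        + t • (∑ l ∈ range (N+1),
            (∑ k ∈ range (m₁+1), a k * powW e n₀ k l) • (T^l) x) := by
    rw [Finset.smul_sum, Finset.smul_sum, ← Finset.sum_add_distrib]
    refine Finset.sum_congr rfl fun l _ => ?_
    rw [add_smul, mul_smul, mul_smul]
  rw [hsplit]
  congr 1
  · rw [sum_extend_vec hb hN₁]
  · congr 1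
    rw [← wSum_apply T (fun l => ∑ k ∈ range (m₁+1), a k * powW e n₀ k l) N x,
      wSum_combW T he a m₁ hN₂, ContinuousLinearMap.sum_apply]
    refine Finset.sum_congr rfl fun k _ => ?_
    rw [ContinuousLinearMap.smul_apply, realSmul]

lemma aeval_eq_wSum (T : X →L[𝕜] X) {p : Polynomial 𝕜} {n₀ : ℕ} {e₀ e : ℕ → ℝ}
    (hp : p = ∑ k ∈ range (n₀+1), Polynomial.C ((e₀ k : 𝕜)) * Polynomial.X ^ k)
    (hee : ∀ k ≤ n₀, e k = e₀ k) :
    Polynomial.aeval T p = wSum T e n₀ := by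
  rw [hp, map_sum, wSum]
  refine Finset.sum_congr rfl fun k hk => ?_
  simp only [mem_range] at hk
  rw [map_mul, Polynomial.aeval_C, map_pow, Polynomial.aeval_X, ← Algebra.smul_def,
    hee k (by omega)]

lemma prodMap_pow {Y : Type*} [AddCommGroup Y] [Module 𝕜 Y]
    [TopologicalSpace Y] [IsTopologicalAddGroup Y] [ContinuousSMul 𝕜 Y]
    (T : X →L[𝕜] X) (S : Y →L[𝕜] Y) (n : ℕ) (x : X) (y : Y) :
    ((T.prodMap S)^n) (x, y) = ((T^n) x, (S^n) y) := by
  induction n with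
  | zero => simp
  | succ n ih =>
      rw [pow_succ', pow_succ', pow_succ']
      rw [ContinuousLinearMap.mul_apply, ContinuousLinearMap.mul_apply,
        ContinuousLinearMap.mul_apply, ih]
      simp

end op

section lcs
variable {𝕜 : Type*} [RCLike 𝕜] {X : Type*} [AddCommGroup X] [Module 𝕜 X] [Module ℝ X]
  [IsScalarTower ℝ 𝕜 X] [TopologicalSpace X] [IsTopologicalAddGroup X] [ContinuousSMul 𝕜 X]
  [LocallyConvexSpace ℝ X]

lemma convex_smulK (c : 𝕜) {W : Set X} (hW : Convex ℝ W) : Convex ℝ (c • W) := by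
  have : IsLinearMap ℝ (fun x : X => c • x) :=
    ⟨fun x y => smul_add c x y, fun r x => smul_comm c r x ▸ (smul_comm r c x)⟩
  simpa [← Set.image_smul] using hW.is_linear_image this

lemma isVonNBounded_convexHull {s : Set X} (hs : IsVonNBounded 𝕜 s) :
    IsVonNBounded 𝕜 (convexHull ℝ s) := by
  intro V hV
  obtain ⟨W, ⟨hWmem, hWconv⟩, hWV⟩ := (LocallyConvexSpace.convex_basis_zero ℝ X).mem_iff.mp hV
  have habs : Absorbs 𝕜 W s := hs hWmem
  refine Absorbs.mono_left ?_ hWV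
  filter_upwards [habs.eventually] with c hc
  calc convexHull ℝ s ⊆ convexHull ℝ (c • W) := convexHull_mono hc
    _ = c • W := (convex_smulK c hWconv).convexHull_eq

lemma exists_real_absorb {s : Set X} (hs : IsVonNBounded 𝕜 s) {W : Set X} (hW : W ∈ 𝓝 (0 : X)) :
    ∃ R : ℝ, 1 ≤ R ∧ s ⊆ ((R : 𝕜)) • W := by
  have habs := (hs hW).eventually
  have hcob : Tendsto (fun r : ℝ => ((r : 𝕜))) atTop (cobounded 𝕜) := by
    rw [← tendsto_norm_atTop_iff_cobounded]
    simpa [RCLike.norm_ofReal] using tendsto_abs_atTop_atTop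
  obtain ⟨R, hR⟩ := ((hcob.eventually habs).and (eventually_ge_atTop (1:ℝ))).exists
  exact ⟨R, hR.2, hR.1⟩

end lcs

/-- A convex-polynomial over `𝕜`: a convex combination of the monomials. -/
def IsConvexPolyK {𝕜 : Type*} [RCLike 𝕜] (p : Polynomial 𝕜) : Prop :=
  ∃ (n : ℕ) (a : ℕ → ℝ), (∀ k, 0 ≤ a k) ∧ (∑ k ∈ Finset.range (n + 1), a k) = 1 ∧
    p = ∑ k ∈ Finset.range (n + 1), Polynomial.C ((a k : 𝕜)) * Polynomial.X ^ k

/-- Direct sums of convex-cyclic operators. -/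
theorem prodMap_convexCyclic
    {𝕜 X₁ X₂ : Type*} [RCLike 𝕜]
    [AddCommGroup X₁] [Module 𝕜 X₁] [Module ℝ X₁] [IsScalarTower ℝ 𝕜 X₁]
    [TopologicalSpace X₁] [IsTopologicalAddGroup X₁] [ContinuousSMul 𝕜 X₁]
    [LocallyConvexSpace ℝ X₁]
    [AddCommGroup X₂] [Module 𝕜 X₂] [Module ℝ X₂] [IsScalarTower ℝ 𝕜 X₂]
    [TopologicalSpace X₂] [IsTopologicalAddGroup X₂] [ContinuousSMul 𝕜 X₂]
    [LocallyConvexSpace ℝ X₂]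
    (T₁ : X₁ →L[𝕜] X₁) (T₂ : X₂ →L[𝕜] X₂)
    (hT₁ : ∃ x : X₁, Dense (convexHull ℝ (Set.range fun n : ℕ => (T₁ ^ n) x)))
    (hT₂ : ∃ x : X₂, Dense (convexHull ℝ (Set.range fun n : ℕ => (T₂ ^ n) x)))
    (p₀ : Polynomial 𝕜) (hp₀ : IsConvexPolyK p₀)
    (hp₀T₁ : ∃ x : X₁,
      Dense (convexHull ℝ (Set.range fun n : ℕ => ((Polynomial.aeval T₁ p₀) ^ n) x)))
    (hp₀T₂ : ∀ x : X₂,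
      Bornology.IsVonNBounded 𝕜 (Set.range fun n : ℕ => ((Polynomial.aeval T₂ p₀) ^ n) x)) :
    (∃ u : X₁ × X₂,
        Dense (convexHull ℝ (Set.range fun n : ℕ => ((T₁.prodMap T₂) ^ n) u))) ∧
    ∀ (u₁ : X₁) (u₂ : X₂),
      Dense (convexHull ℝ (Set.range fun n : ℕ => ((Polynomial.aeval T₁ p₀) ^ n) u₁)) →
      Dense (convexHull ℝ (Set.range fun n : ℕ => (T₂ ^ n) u₂)) →
      Dense (convexHull ℝ (Set.range fun n : ℕ => ((T₁.prodMap T₂) ^ n) (u₁, u₂))) := by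
  obtain ⟨n₀, e₀, he0, he1, hpe⟩ := hp₀
  set e : ℕ → ℝ := fun k => if k ≤ n₀ then e₀ k else 0 with he_def
  have hee : ∀ k ≤ n₀, e k = e₀ k := fun k hk => by simp only [he_def]; rw [if_pos hk]
  have hegood : GoodW e n₀ := by
    refine ⟨fun k => ?_, ?_, fun k hk => ?_⟩
    · simp only [he_def]; split <;> [exact he0 k; rfl]
    · rw [Finset.sum_congr rfl fun k hk => hee k (by simpa [Nat.lt_succ_iff] using hk), he1]
    · simp only [he_def]; rw [if_neg (by omega)]
  have hP₁ : Polynomial.aeval T₁ p₀ = wSum T₁ e n₀ := aeval_eq_wSum T₁ hpe hee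
  have hP₂ : Polynomial.aeval T₂ p₀ = wSum T₂ e n₀ := aeval_eq_wSum T₂ hpe hee
  have main : ∀ (u₁ : X₁) (u₂ : X₂),
      Dense (convexHull ℝ (Set.range fun n : ℕ => ((Polynomial.aeval T₁ p₀) ^ n) u₁)) →
      Dense (convexHull ℝ (Set.range fun n : ℕ => (T₂ ^ n) u₂)) →
      Dense (convexHull ℝ (Set.range fun n : ℕ => ((T₁.prodMap T₂) ^ n) (u₁, u₂))) := by
    intro u₁ u₂ h₁ h₂
    rw [dense_iff_inter_open]
    rintro U hU ⟨y, hyU⟩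
    obtain ⟨V₁, V₂, hV₁open, hV₂open, hy₁, hy₂, hVU⟩ :=
      isOpen_prod_iff.mp hU y.1 y.2 hyU
    -- Step 1: convex neighborhood setup in X₂
    have hA : ((fun z : X₂ => y.2 + z) ⁻¹' V₂) ∈ 𝓝 (0 : X₂) := by
      have hc : Continuous fun z : X₂ => y.2 + z := continuous_const.add continuous_id
      have := hc.continuousAt (x := (0 : X₂))
      refine this.preimage_mem_nhds ?_
      simpa using hV₂open.mem_nhds hy₂
    obtain ⟨B, hB, hBadd⟩ := exists_nhds_zero_half hA
    obtain ⟨W, ⟨hWmem, hWconv⟩, hWB⟩ :=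
      (LocallyConvexSpace.convex_basis_zero ℝ X₂).mem_iff.mp hB
    have h0W : (0:X₂) ∈ W := mem_of_mem_nhds hWmem
    -- Step 2: choose z₂ in the hull of the T₂-orbit of u₂, close to y.2
    have hSnhds : ((fun z : X₂ => z - y.2) ⁻¹' W) ∈ 𝓝 y.2 := by
      have hc : Continuous fun z : X₂ => z - y.2 := continuous_id.sub continuous_const
      have := hc.continuousAt (x := y.2)
      refine this.preimage_mem_nhds ?_
      simpa using hWmem
    obtain ⟨z₂, hz₂W, hz₂hull⟩ := mem_closure_iff_nhds.mp (h₂ y.2) _ hSnhds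
    obtain ⟨b, m₂, hbgood, hz₂eq⟩ := exists_goodW_of_mem_convexHull hz₂hull
    -- Step 3: absorb the bounded set
    have hD : IsVonNBounded 𝕜
        ((convexHull ℝ (Set.range fun n : ℕ => ((Polynomial.aeval T₂ p₀) ^ n) u₂))
          + ({-y.2} : Set X₂)) :=
      (isVonNBounded_convexHull (hp₀T₂ u₂)).add (Bornology.isVonNBounded_singleton _)
    obtain ⟨R, hR1, hRW⟩ := exists_real_absorb hD hWmem
    have hR0 : (0:ℝ) < R := lt_of_lt_of_le one_pos hR1
    set t : ℝ := R⁻¹ with ht_def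
    have ht0 : 0 < t := inv_pos.mpr hR0
    have ht1 : t ≤ 1 := by
      rw [ht_def]
      rw [inv_le_one_iff₀]
      right; exact hR1
    have htR : t * R = 1 := inv_mul_cancel₀ (ne_of_gt hR0)
    -- Step 4: choose ζ in the hull of the p₀(T₁)-orbit of u₁
    set q1 : X₁ := ∑ j ∈ range (m₂+1), b j • (T₁^j) u₁ with hq1_def
    have htK : ((t : 𝕜)) ≠ 0 := by
      simp only [ne_eq, RCLike.ofReal_eq_zero]
      exact ne_of_gt ht0
    set gpt : X₁ := ((t : 𝕜))⁻¹ • (y.1 - (1-t) • q1) with hgpt_def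
    have hgval : (1-t) • q1 + t • gpt = y.1 := by
      rw [hgpt_def, ← realSmul (𝕜 := 𝕜) t, smul_inv_smul₀ htK]
      abel
    have hcont : Continuous fun ζ : X₁ => (1-t) • q1 + t • ζ := by
      have : (fun ζ : X₁ => (1-t) • q1 + t • ζ)
          = fun ζ : X₁ => (1-t) • q1 + ((t : 𝕜)) • ζ := by
        funext ζ; rw [realSmul]
      rw [this]
      exact continuous_const.add (continuous_id.const_smul _)
    have hS₁ : ((fun ζ : X₁ => (1-t) • q1 + t • ζ) ⁻¹' V₁) ∈ 𝓝 gpt := by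
      refine (hcont.continuousAt (x := gpt)).preimage_mem_nhds ?_
      rw [hgval]
      exact hV₁open.mem_nhds hy₁
    obtain ⟨ζ, hζV, hζhull⟩ := mem_closure_iff_nhds.mp (h₁ gpt) _ hS₁
    obtain ⟨a, m₁, hagood, hζeq⟩ := exists_goodW_of_mem_convexHull hζhull
    -- Step 5: assemble the final convex combination of the orbit of T₁ ⊕ T₂
    set N : ℕ := max m₂ (n₀ * m₁) with hN_def
    have hN₁ : m₂ ≤ N := le_max_left _ _
    have hN₂ : n₀ * m₁ ≤ N := le_max_right _ _
    set d : ℕ → ℝ := fun l =>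
      (1-t) * b l + t * (∑ k ∈ range (m₁+1), a k * powW e n₀ k l) with hd_def
    have hd0 : ∀ l, 0 ≤ d l := by
      intro l
      have h1 : 0 ≤ b l := hbgood.1 l
      have h2 : 0 ≤ ∑ k ∈ range (m₁+1), a k * powW e n₀ k l :=
        Finset.sum_nonneg fun k _ => mul_nonneg (hagood.1 k) ((hegood.powW k).1 l)
      have hdl : d l = (1-t) * b l + t * (∑ k ∈ range (m₁+1), a k * powW e n₀ k l) := by
        rw [hd_def]
      rw [hdl]
      exact add_nonneg (mul_nonneg (by linarith) h1) (mul_nonneg ht0.le h2)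
    have hd1 : ∑ l ∈ range (N+1), d l = 1 := by
      have hb' : ∑ l ∈ range (N+1), b l = 1 := by
        rw [sum_extend hbgood.2.2 hN₁, hbgood.2.1]
      have hAsum : ∑ l ∈ range (N+1), ∑ k ∈ range (m₁+1), a k * powW e n₀ k l = 1 := by
        rw [Finset.sum_comm]
        have : ∀ k ∈ range (m₁+1),
            ∑ l ∈ range (N+1), a k * powW e n₀ k l = a k := by
          intro k hk
          simp only [mem_range] at hk
          rw [← Finset.mul_sum]
          have hk' : n₀ * k ≤ N :=
            le_trans (Nat.mul_le_mul_left n₀ (by omega)) hN₂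
          rw [sum_extend (hegood.powW k).2.2 hk', (hegood.powW k).2.1, mul_one]
        rw [Finset.sum_congr rfl this, hagood.2.1]
      calc ∑ l ∈ range (N+1), d l
          = ∑ l ∈ range (N+1),
              ((1-t) * b l + t * (∑ k ∈ range (m₁+1), a k * powW e n₀ k l)) := by rw [hd_def]
        _ = (1-t) * (∑ l ∈ range (N+1), b l)
              + t * (∑ l ∈ range (N+1), ∑ k ∈ range (m₁+1), a k * powW e n₀ k l) := by
            rw [Finset.sum_add_distrib, Finset.mul_sum, Finset.mul_sum]
        _ = 1 := by rw [hb', hAsum]; ring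
    -- the final vector
    set v : X₁ × X₂ := ∑ l ∈ range (N+1), d l • ((T₁.prodMap T₂)^l) (u₁, u₂) with hv_def
    have hvhull : v ∈ convexHull ℝ (Set.range fun n : ℕ => ((T₁.prodMap T₂) ^ n) (u₁, u₂)) :=
      sum_mem_convexHull hd0 hd1
    -- components of v
    have hvcomp : v = (∑ l ∈ range (N+1), d l • (T₁^l) u₁,
        ∑ l ∈ range (N+1), d l • (T₂^l) u₂) := by
      rw [hv_def, ← prod_sum_eq]
      refine Finset.sum_congr rfl fun l _ => ?_
      rw [prodMap_pow]
      rfl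
    -- first component lands in V₁
    have hv₁ : ∑ l ∈ range (N+1), d l • (T₁^l) u₁ = (1-t) • q1 + t • ζ := by
      simp only [hd_def]
      rw [key_comp T₁ u₁ hegood hbgood.2.2 a m₁ t hN₁ hN₂]
      rw [hq1_def, hζeq]
      congr 2
      refine Finset.sum_congr rfl fun k _ => ?_
      rw [hP₁]
    have hv₁V : (∑ l ∈ range (N+1), d l • (T₁^l) u₁) ∈ V₁ := by
      rw [hv₁]
      exact hζV
    -- second component lands in V₂
    set vA : X₂ := ∑ k ∈ range (m₁+1), a k • ((Polynomial.aeval T₂ p₀)^k) u₂ with hvA_def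
    have hv₂ : ∑ l ∈ range (N+1), d l • (T₂^l) u₂ = (1-t) • z₂ + t • vA := by
      simp only [hd_def]
      rw [key_comp T₂ u₂ hegood hbgood.2.2 a m₁ t hN₁ hN₂]
      rw [hz₂eq, hvA_def]
      congr 2
      refine Finset.sum_congr rfl fun k _ => ?_
      rw [hP₂]
    have hvAhull : vA ∈ convexHull ℝ
        (Set.range fun n : ℕ => ((Polynomial.aeval T₂ p₀) ^ n) u₂) :=
      sum_mem_convexHull hagood.1 hagood.2.1
    have hw1 : (1-t) • (z₂ - y.2) ∈ W := by
      have := hWconv hz₂W h0W (a := 1-t) (b := t) (by linarith) ht0.le (by ring)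
      simpa using this
    have hw2 : t • (vA - y.2) ∈ W := by
      have hmem : vA - y.2 ∈
          (convexHull ℝ (Set.range fun n : ℕ => ((Polynomial.aeval T₂ p₀) ^ n) u₂))
            + ({-y.2} : Set X₂) := by
        rw [sub_eq_add_neg]
        exact Set.add_mem_add hvAhull rfl
      obtain ⟨w, hw, hwe⟩ := hRW hmem
      rw [← hwe, ← realSmul (𝕜 := 𝕜) t, smul_smul, ← RCLike.ofReal_mul, htR]
      simpa using hw
    have hv₂V : (∑ l ∈ range (N+1), d l • (T₂^l) u₂) ∈ V₂ := by
      have hsum : ∑ l ∈ range (N+1), d l • (T₂^l) u₂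
          = y.2 + ((1-t) • (z₂ - y.2) + t • (vA - y.2)) := by
        rw [hv₂]
        module
      rw [hsum]
      exact hBadd _ (hWB hw1) _ (hWB hw2)
    refine ⟨v, ?_, hvhull⟩
    apply hVU
    rw [hvcomp]
    exact Set.mk_mem_prod hv₁V hv₂V
  refine ⟨?_, main⟩
  obtain ⟨u₁, h₁⟩ := hp₀T₁
  obtain ⟨u₂, h₂⟩ := hT₂
  exact ⟨(u₁, u₂), main u₁ u₂ h₁ h₂⟩
end

section
/- Let S = {z₁, ..., z_N} be distinct complex numbers with R = max|z_k| > 1, such that z_j ≠ conj(z_k) whenever |z_j| = |z_k| = R and j ≠ k. Then for all α ∈ (0,1) except possibly one value, there exists K > 0 such that for all m ≥ K the convex-polynomial p_{m,α}(z) = zᵐ(αz + 1 − α) peaks on S at a point z_{k₀} with |z_{k₀}| = R; that is, |p_{m,α}(z_{k₀})| > |p_{m,α}(z)| for all z ∈ S with z ≠ z_{k₀}, and max_{z ∈ S} |p_{m,α}(z)| = Rᵐ · max{|α z_k + (1−α)| : |z_k| = R}. -/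
/-- Peaking convex-polynomials `p_{m,α}(z) = zᵐ (α z + 1 - α)`. -/
theorem peaking_convexPolynomials
    (S : Finset ℂ) (hS : S.Nonempty) (R : ℝ)
    (hR : IsGreatest ((fun z => ‖z‖) '' (S : Set ℂ)) R) (hR1 : 1 < R)
    (hconj : ∀ z ∈ S, ∀ w ∈ S, ‖z‖ = R → ‖w‖ = R → z ≠ w →
      z ≠ starRingEnd ℂ w) :
    ∃ α₀ : ℝ, ∀ α ∈ Set.Ioo (0 : ℝ) 1, α ≠ α₀ →
      ∃ K : ℕ, ∀ m : ℕ, K ≤ m →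
        ∃ z₀ ∈ S, ‖z₀‖ = R ∧
          (∀ z ∈ S, z ≠ z₀ →
            ‖z ^ m * ((α : ℂ) * z + (1 - (α : ℂ)))‖ <
              ‖z₀ ^ m * ((α : ℂ) * z₀ + (1 - (α : ℂ)))‖) ∧
          ∃ cα : ℝ,
            IsGreatest ((fun z => ‖(α : ℂ) * z + (1 - (α : ℂ))‖) ''
              {z : ℂ | z ∈ S ∧ ‖z‖ = R}) cα ∧
            ‖z₀ ^ m * ((α : ℂ) * z₀ + (1 - (α : ℂ)))‖ = R ^ m * cα := by
  classical
  have hR0 : (0:ℝ) < R := lt_trans one_pos hR1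
  -- key identity: |αz + (1-α)|² = α²|z|² + (1-α)² + 2α(1-α) Re z
  have key : ∀ (α : ℝ) (z : ℂ), (‖(α:ℂ)*z + (1-(α:ℂ))‖)^2 =
      α^2 * (‖z‖)^2 + (1-α)^2 + 2*α*(1-α)*z.re := by
    intro α z
    rw [show α^2 * (‖z‖)^2 = α^2 * Complex.normSq z by rw [Complex.sq_norm],
      ← Complex.normSq_eq_norm_sq]
    simp only [Complex.normSq_apply, Complex.add_re, Complex.add_im, Complex.mul_re,
      Complex.mul_im, Complex.sub_re, Complex.sub_im, Complex.ofReal_re, Complex.ofReal_im,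
      Complex.one_re, Complex.one_im]
    ring
  -- the set of points of maximal modulus
  set T := S.filter (fun z => ‖z‖ = R) with hT
  have hTne : T.Nonempty := by
    obtain ⟨z, hz, hzR⟩ := hR.1
    exact ⟨z, Finset.mem_filter.mpr ⟨hz, hzR⟩⟩
  obtain ⟨z₀, hz₀T, hz₀max⟩ := T.exists_max_image Complex.re hTne
  have hz₀S : z₀ ∈ S := (Finset.mem_filter.mp hz₀T).1
  have hz₀R : ‖z₀‖ = R := (Finset.mem_filter.mp hz₀T).2
  -- strict maximality of real part on T
  have hstrict : ∀ z ∈ S, ‖z‖ = R → z ≠ z₀ → z.re < z₀.re := by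
    intro z hzS hzR hne
    have hle : z.re ≤ z₀.re := hz₀max z (Finset.mem_filter.mpr ⟨hzS, hzR⟩)
    rcases lt_or_eq_of_le hle with h | h
    · exact h
    · exfalso
      have hns : Complex.normSq z = Complex.normSq z₀ := by
        rw [← Complex.sq_norm, ← Complex.sq_norm, hzR, hz₀R]
      rw [Complex.normSq_apply, Complex.normSq_apply, h] at hns
      have him : (z.im - z₀.im) * (z.im + z₀.im) = 0 := by nlinarith
      rcases mul_eq_zero.mp him with h2 | h2
      · exact hne (Complex.ext h (by linarith))
      · exact hconj z hzS z₀ hz₀S hzR hz₀R hne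
          (Complex.ext (by simpa using h) (by simp [Complex.conj_im]; linarith))
  refine ⟨1/(1+R), ?_⟩
  intro α hα hαne
  have hα0 : (0:ℝ) < α := hα.1
  have hα1 : α < 1 := hα.2
  set c := ‖(α:ℂ)*z₀ + (1-(α:ℂ))‖ with hc
  -- c > 0
  have hc0 : 0 < c := by
    rw [hc]
    refine norm_pos_iff.mpr (fun h0 => ?_)
    have he2 : (α:ℂ)*z₀ = ((α - 1 : ℝ) : ℂ) := by push_cast; linear_combination h0
    have habs : ‖(α:ℂ)*z₀‖ = ‖((α - 1 : ℝ) : ℂ)‖ := by rw [he2]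
    rw [norm_mul, Complex.norm_real, Complex.norm_real, Real.norm_eq_abs, Real.norm_eq_abs, hz₀R] at habs
    rw [abs_of_pos hα0, abs_of_neg (by linarith : α - 1 < 0)] at habs
    apply hαne
    field_simp
    linarith
  -- c is the greatest value on the peak set
  have hcg : IsGreatest ((fun z => ‖(α : ℂ) * z + (1 - (α : ℂ))‖) ''
      {z : ℂ | z ∈ S ∧ ‖z‖ = R}) c := by
    constructor
    · exact ⟨z₀, ⟨hz₀S, hz₀R⟩, rfl⟩
    · rintro y ⟨z, ⟨hzS, hzR⟩, rfl⟩
      apply le_of_pow_le_pow_left₀ (two_ne_zero) (le_of_lt hc0)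
      rw [key, hc, key, hzR, hz₀R]
      have hre : z.re ≤ z₀.re := hz₀max z (Finset.mem_filter.mpr ⟨hzS, hzR⟩)
      have hp : (0:ℝ) < 2*α*(1-α) := by nlinarith
      nlinarith [mul_le_mul_of_nonneg_left hre hp.le]
  set M : ℝ := α * R + 1 with hM
  have hM0 : (0:ℝ) < M := by nlinarith
  -- the uniform bound for small-modulus points
  have hev : ∀ᶠ m in Filter.atTop, ∀ z ∈ S,
      ‖z‖ ≠ R → (‖z‖) ^ m * M < R ^ m * c := by
    rw [Filter.eventually_all_finset]
    intro z hzS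
    by_cases hzR : ‖z‖ = R
    · filter_upwards with m h; exact absurd hzR h
    · have hzlt : ‖z‖ < R :=
        lt_of_le_of_ne (hR.2 ⟨z, hzS, rfl⟩) hzR
      set r : ℝ := ‖z‖ / R with hr
      have hr0 : 0 ≤ r := div_nonneg (norm_nonneg z) hR0.le
      have hr1 : r < 1 := (div_lt_one hR0).mpr hzlt
      have htend := tendsto_pow_atTop_nhds_zero_of_lt_one hr0 hr1
      have hcm : (0:ℝ) < c / M := div_pos hc0 hM0
      filter_upwards [htend.eventually_lt_const hcm] with m hm _
      have h1 : r ^ m * M < c := (lt_div_iff₀ hM0).mp hm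
      have h2 : (‖z‖) ^ m = r ^ m * R ^ m := by
        rw [hr, div_pow, div_mul_cancel₀]
        positivity
      rw [h2]
      have hRm : (0:ℝ) < R ^ m := pow_pos hR0 m
      calc r ^ m * R ^ m * M = (r ^ m * M) * R ^ m := by ring
        _ < c * R ^ m := by exact mul_lt_mul_of_pos_right h1 hRm
        _ = R ^ m * c := by ring
  obtain ⟨K, hK⟩ := Filter.eventually_atTop.mp hev
  refine ⟨K, fun m hm => ?_⟩
  have habs_z₀ : ‖z₀ ^ m * ((α : ℂ) * z₀ + (1 - (α : ℂ)))‖ = R ^ m * c := by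
    rw [norm_mul, norm_pow, hz₀R]
  refine ⟨z₀, hz₀S, hz₀R, ?_, c, hcg, habs_z₀⟩
  intro z hzS hne
  rw [habs_z₀, norm_mul, norm_pow]
  by_cases hzR : ‖z‖ = R
  · rw [hzR]
    apply mul_lt_mul_of_pos_left ?_ (pow_pos hR0 m)
    apply lt_of_pow_lt_pow_left₀ 2 hc0.le
    rw [key, hc, key, hzR, hz₀R]
    have hre : z.re < z₀.re := hstrict z hzS hzR hne
    have hp : (0:ℝ) < 2*α*(1-α) := by nlinarith
    nlinarith [mul_lt_mul_of_pos_left hre hp]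
  · have hbound : ‖(α : ℂ) * z + (1 - (α : ℂ))‖ ≤ M := by
      calc ‖(α : ℂ) * z + (1 - (α : ℂ))‖
          ≤ ‖(α : ℂ) * z‖ + ‖(1 - (α : ℂ))‖ := norm_add_le _ _
        _ = α * ‖z‖ + (1 - α) := by
            rw [norm_mul, Complex.norm_real, Real.norm_eq_abs, abs_of_pos hα0]
            congr 1
            rw [show (1 - (α:ℂ)) = (((1 - α : ℝ)) : ℂ) by push_cast; ring,
              Complex.norm_real, Real.norm_eq_abs, abs_of_pos (by linarith)]
        _ ≤ M := by
            have := hR.2 ⟨z, hzS, rfl⟩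
            nlinarith
    calc ‖z‖ ^ m * ‖(α : ℂ) * z + (1 - (α : ℂ))‖
        ≤ ‖z‖ ^ m * M := by
          apply mul_le_mul_of_nonneg_left hbound (pow_nonneg (norm_nonneg z) m)
      _ < R ^ m * c := hK m hm z hzS hzR
end

section
/- Let {M_n} be a sequence of real numbers with M_n → +∞, {ε_n} a sequence of complex numbers with |ε_n| → 0, and w a nonzero complex number. If θ ∈ ℝ is not an integer multiple of π, then there exists a strictly increasing sequence of positive integers {n_k} such that M_{n_k} · Re(ε_{n_k} + e^{i n_k θ} w) → +∞. -/
open Filter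

private lemma re_sq_eq (a : ℂ) : a.re ^ 2 = ((a ^ 2).re + ‖a‖ ^ 2) / 2 := by
  rw [Complex.sq_norm]
  simp only [Complex.normSq_apply, pow_two, Complex.mul_re]
  ring

private lemma geom_bound (z : ℂ) (hz : z ≠ 1) (h1 : ‖z‖ = 1) (N K : ℕ) :
    ‖∑ j ∈ Finset.range K, z ^ (N + j)‖ ≤ 2 / ‖z - 1‖ := by
  have hzne : z - 1 ≠ 0 := sub_ne_zero.mpr hz
  have hpos : 0 < ‖z - 1‖ := norm_pos_iff.mpr hzne
  have : (∑ j ∈ Finset.range K, z ^ (N + j)) = z ^ N * ((z ^ K - 1) / (z - 1)) := by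
    rw [← geom_sum_eq hz]
    rw [Finset.mul_sum]
    exact Finset.sum_congr rfl fun j _ => (pow_add z N j)
  rw [this, norm_mul, norm_div, norm_pow, h1, one_pow, one_mul]
  gcongr
  calc ‖z ^ K - 1‖ ≤ ‖z ^ K‖ + ‖(1 : ℂ)‖ := by
        simpa using norm_sub_le (z ^ K) 1
    _ = 2 := by rw [norm_pow, h1, one_pow, norm_one]; norm_num

private lemma key_freq (z w : ℂ) (hw : w ≠ 0) (hz1 : z ≠ 1) (hz2 : z ^ 2 ≠ 1)
    (habs : ‖z‖ = 1) (N : ℕ) :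
    ∃ n, N ≤ n ∧ ‖w‖ / 16 ≤ (z ^ n * w).re := by
  by_contra hcon
  push_neg at hcon
  set W : ℝ := ‖w‖ with hW
  have hWpos : 0 < W := by simpa [hW] using norm_pos_iff.mpr hw
  set c : ℝ := W / 16 with hc
  have hcpos : 0 < c := by positivity
  set C1 : ℝ := 2 / ‖z - 1‖ * W with hC1
  set C2 : ℝ := 2 / ‖z ^ 2 - 1‖ * W ^ 2 with hC2
  have hC1nn : 0 ≤ C1 := by
    have : 0 ≤ 2 / ‖z - 1‖ := by positivity
    positivity
  have hC2nn : 0 ≤ C2 := by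
    have : 0 ≤ 2 / ‖z ^ 2 - 1‖ := by positivity
    positivity
  obtain ⟨K, hK⟩ := exists_nat_gt ((C2 / 2 + W * C1) / (3 * W ^ 2 / 8))
  have hKbig : C2 / 2 + W * C1 < K * (3 * W ^ 2 / 8) := by
    rw [div_lt_iff₀ (by positivity)] at hK
    linarith
  set f : ℕ → ℝ := fun j => (z ^ (N + j) * w).re with hf
  have habsn : ∀ n : ℕ, ‖z ^ n * w‖ = W := by
    intro n; rw [norm_mul, norm_pow, habs, one_pow, one_mul]
  -- (i) |∑ f| ≤ C1
  have hi : |∑ j ∈ Finset.range K, f j| ≤ C1 := by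
    have : (∑ j ∈ Finset.range K, f j)
        = ((∑ j ∈ Finset.range K, z ^ (N + j)) * w).re := by
      rw [Finset.sum_mul, Complex.re_sum]
    rw [this]
    calc |((∑ j ∈ Finset.range K, z ^ (N + j)) * w).re|
        ≤ ‖(∑ j ∈ Finset.range K, z ^ (N + j)) * w‖ :=
          Complex.abs_re_le_norm _
      _ = ‖∑ j ∈ Finset.range K, z ^ (N + j)‖ * W := by rw [norm_mul]
      _ ≤ 2 / ‖z - 1‖ * W :=
          mul_le_mul_of_nonneg_right (geom_bound z hz1 habs N K) hWpos.le
  -- (ii) lower bound on sum of squares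
  have hii : (K * W ^ 2 - C2) / 2 ≤ ∑ j ∈ Finset.range K, f j ^ 2 := by
    have heach : ∀ j, f j ^ 2 = (((z ^ 2) ^ (N + j) * w ^ 2).re + W ^ 2) / 2 := by
      intro j
      have h1 : (z ^ (N + j) * w) ^ 2 = (z ^ 2) ^ (N + j) * w ^ 2 := by ring
      have := re_sq_eq (z ^ (N + j) * w)
      rw [h1, habsn] at this
      exact this
    have hsum : (∑ j ∈ Finset.range K, f j ^ 2)
        = (((∑ j ∈ Finset.range K, (z ^ 2) ^ (N + j)) * w ^ 2).re + K * W ^ 2) / 2 := by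
      simp only [heach]
      rw [Finset.sum_mul, Complex.re_sum, ← Finset.sum_div, Finset.sum_add_distrib,
        Finset.sum_const, Finset.card_range, nsmul_eq_mul]
    rw [hsum]
    have hb : |((∑ j ∈ Finset.range K, (z ^ 2) ^ (N + j)) * w ^ 2).re| ≤ C2 := by
      calc |((∑ j ∈ Finset.range K, (z ^ 2) ^ (N + j)) * w ^ 2).re|
          ≤ ‖(∑ j ∈ Finset.range K, (z ^ 2) ^ (N + j)) * w ^ 2‖ :=
            Complex.abs_re_le_norm _
        _ = ‖∑ j ∈ Finset.range K, (z ^ 2) ^ (N + j)‖ * W ^ 2 := by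
            rw [norm_mul, norm_pow]
        _ ≤ 2 / ‖z ^ 2 - 1‖ * W ^ 2 := by
            apply mul_le_mul_of_nonneg_right _ (by positivity)
            exact geom_bound (z ^ 2) hz2 (by rw [norm_pow, habs, one_pow]) N K
    have := abs_le.mp hb
    linarith [this.1]
  -- (iii) upper bound on sum of squares
  have hflt : ∀ j, f j < c := fun j => hcon (N + j) (Nat.le_add_right N j)
  have hfabs : ∀ j, |f j| ≤ W := by
    intro j
    calc |f j| ≤ ‖z ^ (N + j) * w‖ := Complex.abs_re_le_norm _
      _ = W := habsn _
  have hiii : (∑ j ∈ Finset.range K, f j ^ 2)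
      ≤ W * (∑ j ∈ Finset.range K, |f j|) := by
    rw [Finset.mul_sum]
    apply Finset.sum_le_sum
    intro j _
    rw [pow_two, ← abs_mul_abs_self]
    exact mul_le_mul_of_nonneg_right (hfabs j) (abs_nonneg _)
  -- (iv) ∑ |f j| ≤ 2 K c + C1
  have hiv : (∑ j ∈ Finset.range K, |f j|) ≤ 2 * K * c + C1 := by
    have hle : ∀ j, |f j| ≤ 2 * c - f j := by
      intro j
      rcases abs_cases (f j) with ⟨h, _⟩ | ⟨h, _⟩ <;> [skip; skip] <;>
        · rw [h]; have := hflt j; linarith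
    calc (∑ j ∈ Finset.range K, |f j|)
        ≤ ∑ j ∈ Finset.range K, (2 * c - f j) :=
          Finset.sum_le_sum fun j _ => hle j
      _ = 2 * K * c - ∑ j ∈ Finset.range K, f j := by
          rw [Finset.sum_sub_distrib, Finset.sum_const, Finset.card_range, nsmul_eq_mul]
          ring
      _ ≤ 2 * K * c + C1 := by
          have := abs_le.mp hi
          linarith [this.1]
  -- combine
  have hchain : (K * W ^ 2 - C2) / 2 ≤ W * (2 * K * c + C1) := by
    calc (K * W ^ 2 - C2) / 2 ≤ ∑ j ∈ Finset.range K, f j ^ 2 := hii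
      _ ≤ W * (∑ j ∈ Finset.range K, |f j|) := hiii
      _ ≤ W * (2 * K * c + C1) := mul_le_mul_of_nonneg_left hiv hWpos.le
  have hcW : W * (2 * (K : ℝ) * c) = K * (W ^ 2 / 8) := by rw [hc]; ring
  nlinarith [hKbig, hchain]

/-- A one-variable growth lemma. -/
theorem one_variable_growth
    (M : ℕ → ℝ) (hM : Tendsto M atTop atTop)
    (ε : ℕ → ℂ) (hε : Tendsto (fun n => ‖ε n‖) atTop (nhds 0))
    (w : ℂ) (hw : w ≠ 0)
    (θ : ℝ) (hθ : ∀ m : ℤ, θ ≠ m * Real.pi) :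
    ∃ n : ℕ → ℕ, StrictMono n ∧ (∀ k, 0 < n k) ∧
      Tendsto (fun k =>
          M (n k) * (ε (n k) + Complex.exp ((n k : ℂ) * (θ : ℂ) * Complex.I) * w).re)
        atTop atTop := by
  set z : ℂ := Complex.exp ((θ : ℂ) * Complex.I) with hzdef
  have habs : ‖z‖ = 1 := Complex.norm_exp_ofReal_mul_I θ
  have hz1 : z ≠ 1 := by
    intro h
    rw [hzdef, Complex.exp_eq_one_iff] at h
    obtain ⟨k, hk⟩ := h
    have hI : (Complex.I : ℂ) ≠ 0 := Complex.I_ne_zero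
    have : (θ : ℂ) = (k : ℂ) * (2 * (Real.pi : ℂ)) := by
      have h2 : (θ : ℂ) * Complex.I = ((k : ℂ) * (2 * (Real.pi : ℂ))) * Complex.I := by
        rw [hk]; ring
      exact mul_right_cancel₀ hI h2
    have : θ = (2 * k : ℤ) * Real.pi := by
      have := this
      push_cast at this ⊢
      exact_mod_cast Complex.ofReal_inj.mp (by push_cast; linear_combination this)
    exact hθ (2 * k) this
  have hz2 : z ^ 2 ≠ 1 := by
    intro h
    have : z ^ 2 = Complex.exp ((2 * θ : ℝ) * Complex.I) := by
      rw [hzdef, ← Complex.exp_nat_mul]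
      push_cast
      ring_nf
    rw [this, Complex.exp_eq_one_iff] at h
    obtain ⟨k, hk⟩ := h
    have hI : (Complex.I : ℂ) ≠ 0 := Complex.I_ne_zero
    have : ((2 * θ : ℝ) : ℂ) = (k : ℂ) * (2 * (Real.pi : ℂ)) := by
      have h2 : ((2 * θ : ℝ) : ℂ) * Complex.I
          = ((k : ℂ) * (2 * (Real.pi : ℂ))) * Complex.I := by rw [hk]; ring
      exact mul_right_cancel₀ hI h2
    have : θ = (k : ℤ) * Real.pi := by
      have := this
      push_cast at this ⊢
      have h3 : (2 : ℂ) * (θ : ℂ) = (k : ℂ) * (2 * (Real.pi : ℂ)) := by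
        push_cast at this ⊢; linear_combination this
      have h4 : (2 : ℝ) * θ = k * (2 * Real.pi) :=
        Complex.ofReal_injective (by push_cast; exact h3)
      linarith
    exact hθ k this
  set c : ℝ := ‖w‖ / 16 with hc
  have hcpos : 0 < c := by
    have : 0 < ‖w‖ := norm_pos_iff.mpr hw
    positivity
  -- frequently property
  have hfreq : ∃ᶠ n in atTop, c ≤ (z ^ n * w).re :=
    frequently_atTop.mpr fun N => key_freq z w hw hz1 hz2 habs N
  have hev1 : ∀ᶠ n in atTop, ‖ε n‖ < c / 2 :=
    hε.eventually (eventually_lt_nhds (by positivity))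
  have hev2 : ∀ᶠ n : ℕ in atTop, 1 ≤ n := eventually_ge_atTop 1
  have hfreq' : ∃ᶠ n in atTop,
      (c ≤ (z ^ n * w).re ∧ ‖ε n‖ < c / 2 ∧ 1 ≤ n) := by
    apply (hfreq.and_eventually (hev1.and hev2)).mono
    tauto
  obtain ⟨φ, hφmono, hφP⟩ := extraction_of_frequently_atTop hfreq'
  refine ⟨φ, hφmono, fun k => (hφP k).2.2, ?_⟩
  have hexp : ∀ k, Complex.exp ((φ k : ℂ) * (θ : ℂ) * Complex.I) = z ^ (φ k) := by
    intro k
    rw [hzdef, ← Complex.exp_nat_mul]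
    ring_nf
  have hre : ∀ k, c / 2 ≤ (ε (φ k) + z ^ (φ k) * w).re := by
    intro k
    obtain ⟨h1, h2, _⟩ := hφP k
    have h3 : -(c / 2) ≤ (ε (φ k)).re := by
      have ha := Complex.abs_re_le_norm (ε (φ k))
      have hb := neg_abs_le ((ε (φ k)).re)
      linarith
    rw [Complex.add_re]
    linarith
  have hMφ : Tendsto (fun k => M (φ k)) atTop atTop := hM.comp hφmono.tendsto_atTop
  have hbase : Tendsto (fun k => M (φ k) * (c / 2)) atTop atTop :=
    hMφ.atTop_mul_const (by positivity)
  apply tendsto_atTop_mono' atTop ?_ hbase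
  filter_upwards [hMφ.eventually (eventually_ge_atTop 0)] with k hk
  rw [hexp k]
  exact mul_le_mul_of_nonneg_left (hre k) hk
end

section
/- Let T = diag(λ₁, ..., λ_N) be a diagonal matrix on ℂ^N. Then T is convex-cyclic if and only if the λ_k are distinct, |λ_k| > 1 for all k, and λ_j ≠ conj(λ_k) for all j, k. When convex-cyclic, the convex-cyclic vectors for T are exactly the vectors with all coordinates nonzero. -/
open Filter Topology Polynomial Finset

lemma cesaro_single (μ : ℂ) (h1 : ‖μ‖ = 1) :
    Tendsto (fun M : ℕ => (∑ n ∈ Finset.range M, μ ^ n) / M) atTop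
      (𝓝 (if μ = 1 then 1 else 0)) := by
  split_ifs with h
  · subst h
    have heq : ∀ᶠ M : ℕ in atTop, (1:ℂ) = (∑ n ∈ Finset.range M, (1:ℂ) ^ n) / M := by
      filter_upwards [eventually_ge_atTop 1] with M hM
      simp only [one_pow, Finset.sum_const, Finset.card_range, nsmul_eq_mul, mul_one]
      rw [div_self]
      exact Nat.cast_ne_zero.mpr (by omega)
    exact Tendsto.congr' heq tendsto_const_nhds
  · apply squeeze_zero_norm (a := fun M : ℕ => (2 / ‖μ - 1‖) / M)
    · intro M
      have hb : ‖μ ^ M - 1‖ ≤ 2 := by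
        calc ‖μ ^ M - 1‖ ≤ ‖μ ^ M‖ + ‖(1:ℂ)‖ := norm_sub_le _ _
          _ = 2 := by rw [norm_pow, h1]; norm_num
      rw [geom_sum_eq h, norm_div, norm_div]
      have : ‖(M:ℂ)‖ = (M:ℝ) := by simp
      rw [this]
      gcongr
    · exact tendsto_const_div_atTop_nhds_zero_nat _

lemma cesaro_fam {ι : Type*} (s : Finset ι) (c ν : ι → ℂ) (h1 : ∀ i ∈ s, ‖ν i‖ = 1) :
    Tendsto (fun M : ℕ => (∑ n ∈ Finset.range M, ∑ i ∈ s, c i * ν i ^ n) / M) atTop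
      (𝓝 (∑ i ∈ s, if ν i = 1 then c i else 0)) := by
  have heq : ∀ M : ℕ, (∑ n ∈ Finset.range M, ∑ i ∈ s, c i * ν i ^ n) / M
      = ∑ i ∈ s, c i * ((∑ n ∈ Finset.range M, ν i ^ n) / M) := by
    intro M
    rw [Finset.sum_comm, Finset.sum_div]
    congr 1; ext i
    rw [← Finset.mul_sum, mul_div_assoc]
  simp only [heq]
  have : (∑ i ∈ s, if ν i = 1 then c i else 0)
      = ∑ i ∈ s, c i * (if ν i = 1 then 1 else 0) := by
    congr 1; ext i; split_ifs <;> simp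
  rw [this]
  exact tendsto_finset_sum _ (fun i hi => (cesaro_single (ν i) (h1 i hi)).const_mul _)

lemma cesaro_re {F : ℕ → ℂ} {L : ℂ}
    (hF : Tendsto (fun M : ℕ => (∑ n ∈ Finset.range M, F n) / M) atTop (𝓝 L)) :
    Tendsto (fun M : ℕ => (∑ n ∈ Finset.range M, (F n).re) / M) atTop (𝓝 L.re) := by
  have h2 := (Complex.continuous_re.tendsto L).comp hF
  convert h2 using 1
  funext M
  show _ = ((∑ n ∈ Finset.range M, F n) / (M:ℂ)).re
  rw [show ((M:ℂ)) = ((M:ℝ):ℂ) by push_cast; ring, Complex.div_ofReal_re, Complex.re_sum]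

lemma cesaro_variance {ι : Type*} [DecidableEq ι] (K : Finset ι) (b μ : ι → ℂ)
    (hnorm : ∀ i ∈ K, ‖μ i‖ = 1)
    (hinj : ∀ i ∈ K, ∀ j ∈ K, μ i = μ j → i = j)
    (hmul : ∀ i ∈ K, ∀ j ∈ K, μ i * μ j ≠ 1) :
    Tendsto (fun M : ℕ => (∑ n ∈ Finset.range M,
        (∑ i ∈ K, b i * μ i ^ n).re) / M) atTop (𝓝 0) ∧
    Tendsto (fun M : ℕ => (∑ n ∈ Finset.range M,
        ((∑ i ∈ K, b i * μ i ^ n).re) ^ 2) / M) atTop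
      (𝓝 ((∑ i ∈ K, ‖b i‖ ^ 2) / 2)) := by
  set conj := starRingEnd ℂ with hconjdef
  have hμ1 : ∀ i ∈ K, μ i ≠ 1 := by
    intro i hi h1
    exact hmul i hi i hi (by rw [h1]; ring)
  constructor
  · have h0 := cesaro_fam K b μ hnorm
    have : (∑ i ∈ K, if μ i = 1 then b i else 0) = 0 := by
      apply Finset.sum_eq_zero
      intro i hi
      rw [if_neg (hμ1 i hi)]
    rw [this] at h0
    simpa using cesaro_re h0
  · -- three product averages
    have hH2 := cesaro_fam (K ×ˢ K) (fun p => b p.1 * b p.2) (fun p => μ p.1 * μ p.2)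
      (by rintro ⟨i, j⟩ hp
          rw [Finset.mem_product] at hp
          rw [norm_mul, hnorm i hp.1, hnorm j hp.2, mul_one])
    have hH2lim : (∑ p ∈ K ×ˢ K, if μ p.1 * μ p.2 = 1 then b p.1 * b p.2 else 0) = 0 := by
      apply Finset.sum_eq_zero
      rintro ⟨i, j⟩ hp
      rw [Finset.mem_product] at hp
      rw [if_neg (hmul i hp.1 j hp.2)]
    rw [hH2lim] at hH2
    have hHbar := cesaro_fam (K ×ˢ K) (fun p => b p.1 * conj (b p.2))
      (fun p => μ p.1 * conj (μ p.2))
      (by rintro ⟨i, j⟩ hp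
          rw [Finset.mem_product] at hp
          rw [norm_mul, hnorm i hp.1, RCLike.norm_conj, hnorm j hp.2, mul_one])
    have hHbarlim : (∑ p ∈ K ×ˢ K, if μ p.1 * conj (μ p.2) = 1 then b p.1 * conj (b p.2) else 0)
        = ∑ i ∈ K, b i * conj (b i) := by
      rw [Finset.sum_product]
      have : ∀ i ∈ K, (∑ j ∈ K, if μ i * conj (μ j) = 1 then b i * conj (b j) else 0)
          = ∑ j ∈ K, if j = i then b i * conj (b j) else 0 := by
        intro i hi
        apply Finset.sum_congr rfl
        intro j hj
        congr 1
        simp only [eq_iff_iff]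
        constructor
        · intro h
          apply hinj j hj i hi
          have hj1 : μ j * conj (μ j) = 1 := by
            rw [hconjdef, Complex.mul_conj, Complex.normSq_eq_norm_sq, hnorm j hj]
            norm_num
          have : μ i * conj (μ j) = μ j * conj (μ j) := by rw [h, hj1]
          exact (mul_right_cancel₀ (fun hc => by simp [hc] at hj1) this).symm
        · rintro rfl
          rw [hconjdef, Complex.mul_conj, Complex.normSq_eq_norm_sq, hnorm j hj]
          norm_num
      rw [Finset.sum_congr rfl this]
      apply Finset.sum_congr rfl
      intro i hi
      rw [Finset.sum_ite_eq', if_pos hi]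
    rw [hHbarlim] at hHbar
    have hH2c := cesaro_fam (K ×ˢ K) (fun p => conj (b p.1) * conj (b p.2))
      (fun p => conj (μ p.1) * conj (μ p.2))
      (by rintro ⟨i, j⟩ hp
          rw [Finset.mem_product] at hp
          rw [norm_mul, RCLike.norm_conj, RCLike.norm_conj, hnorm i hp.1, hnorm j hp.2, mul_one])
    have hH2clim : (∑ p ∈ K ×ˢ K,
        if conj (μ p.1) * conj (μ p.2) = 1 then conj (b p.1) * conj (b p.2) else 0) = 0 := by
      apply Finset.sum_eq_zero
      rintro ⟨i, j⟩ hp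
      rw [Finset.mem_product] at hp
      rw [if_neg]
      intro h
      apply hmul i hp.1 j hp.2
      have := congrArg conj h
      rw [map_mul, hconjdef, Complex.conj_conj, Complex.conj_conj, map_one] at this
      exact this
    rw [hH2clim] at hH2c
    -- combine
    have hcomb : Tendsto (fun M : ℕ => (∑ n ∈ Finset.range M,
        ((∑ p ∈ K ×ˢ K, (b p.1 * b p.2) * (μ p.1 * μ p.2) ^ n)
          + 2 * (∑ p ∈ K ×ˢ K, (b p.1 * conj (b p.2)) * (μ p.1 * conj (μ p.2)) ^ n)
          + (∑ p ∈ K ×ˢ K, (conj (b p.1) * conj (b p.2)) * (conj (μ p.1) * conj (μ p.2)) ^ n))) / M)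
        atTop (𝓝 (0 + 2 * (∑ i ∈ K, b i * conj (b i)) + 0)) := by
      have := ((hH2.add ((hHbar.const_mul 2))).add hH2c)
      convert this using 1
      funext M
      rw [Finset.sum_add_distrib, Finset.sum_add_distrib, ← Finset.mul_sum]
      ring
    -- identify integrand with (2 * re h)^2
    have hident : ∀ n : ℕ,
        ((∑ p ∈ K ×ˢ K, (b p.1 * b p.2) * (μ p.1 * μ p.2) ^ n)
          + 2 * (∑ p ∈ K ×ˢ K, (b p.1 * conj (b p.2)) * (μ p.1 * conj (μ p.2)) ^ n)
          + (∑ p ∈ K ×ˢ K, (conj (b p.1) * conj (b p.2)) * (conj (μ p.1) * conj (μ p.2)) ^ n))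
        = (((2 * (∑ i ∈ K, b i * μ i ^ n).re) ^ 2 : ℝ) : ℂ) := by
      intro n
      set h : ℂ := ∑ i ∈ K, b i * μ i ^ n with hh
      have hconjh : conj h = ∑ i ∈ K, conj (b i) * (conj (μ i)) ^ n := by
        rw [hh, map_sum]
        apply Finset.sum_congr rfl
        intro i _
        rw [map_mul, map_pow]
      have e1 : (∑ p ∈ K ×ˢ K, (b p.1 * b p.2) * (μ p.1 * μ p.2) ^ n) = h * h := by
        rw [hh, Finset.sum_mul_sum, ← Finset.sum_product']
        apply Finset.sum_congr rfl
        rintro ⟨i, j⟩ _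
        ring
      have e2 : (∑ p ∈ K ×ˢ K, (b p.1 * conj (b p.2)) * (μ p.1 * conj (μ p.2)) ^ n)
          = h * conj h := by
        rw [hh, hconjh, Finset.sum_mul_sum, ← Finset.sum_product']
        apply Finset.sum_congr rfl
        rintro ⟨i, j⟩ _
        ring
      have e3 : (∑ p ∈ K ×ˢ K, (conj (b p.1) * conj (b p.2)) * (conj (μ p.1) * conj (μ p.2)) ^ n)
          = conj h * conj h := by
        rw [hconjh, Finset.sum_mul_sum, ← Finset.sum_product']
        apply Finset.sum_congr rfl
        rintro ⟨i, j⟩ _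
        ring
      rw [e1, e2, e3]
      have : ((2 * h.re : ℝ) : ℂ) = h + conj h := by
        rw [hconjdef, Complex.add_conj]
      calc h * h + 2 * (h * conj h) + conj h * conj h = (h + conj h) ^ 2 := by ring
        _ = (((2 * h.re) ^ 2 : ℝ) : ℂ) := by rw [← this]; push_cast; ring
    simp only [hident] at hcomb
    -- take re and divide by 4
    have hre := cesaro_re hcomb
    have hfinal : ∀ M : ℕ, (∑ n ∈ Finset.range M, ((∑ i ∈ K, b i * μ i ^ n).re) ^ 2) / M
        = ((∑ n ∈ Finset.range M, ((((2 * (∑ i ∈ K, b i * μ i ^ n).re) ^ 2 : ℝ) : ℂ)).re) / M) / 4 := by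
      intro M
      simp only [Complex.ofReal_re]
      rw [div_div]
      have h4 : (∑ n ∈ Finset.range M, (2 * (∑ i ∈ K, b i * μ i ^ n).re) ^ 2)
          = 4 * ∑ n ∈ Finset.range M, ((∑ i ∈ K, b i * μ i ^ n).re) ^ 2 := by
        rw [Finset.mul_sum]
        apply Finset.sum_congr rfl
        intro n _
        ring
      rw [h4]
      ring
    simp only [hfinal]
    have hlim : ((0 + 2 * (∑ i ∈ K, b i * conj (b i)) + 0 : ℂ)).re / 4
        = (∑ i ∈ K, ‖b i‖ ^ 2) / 2 := by
      simp only [zero_add, add_zero]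
      have : (2 * (∑ i ∈ K, b i * conj (b i)) : ℂ)
          = (((2 * ∑ i ∈ K, ‖b i‖ ^ 2 : ℝ)) : ℂ) := by
        push_cast
        congr 1
        apply Finset.sum_congr rfl
        intro i _
        rw [hconjdef, Complex.mul_conj, Complex.normSq_eq_norm_sq]
        push_cast; ring
      rw [this, Complex.ofReal_re]
      ring
    rw [← hlim]
    exact hre.div_const 4

lemma exists_large_of_cesaro (g : ℕ → ℝ) (B V : ℝ) (hB0 : 0 < B) (hV : 0 < V)
    (hb : ∀ n, |g n| ≤ B)
    (h1 : Tendsto (fun M : ℕ => (∑ n ∈ Finset.range M, g n) / M) atTop (𝓝 0))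
    (h2 : Tendsto (fun M : ℕ => (∑ n ∈ Finset.range M, (g n) ^ 2) / M) atTop (𝓝 V)) :
    ∀ M₀ : ℕ, ∃ n, M₀ ≤ n ∧ V / (4 * B) ≤ g n := by
  intro M₀
  by_contra hcon
  push_neg at hcon
  set δ : ℝ := V / (4 * B) with hδ
  have hδpos : 0 < δ := by positivity
  have hpt : ∀ n, M₀ ≤ n → g n ^ 2 ≤ B * (2 * δ) - B * g n := by
    intro n hn
    have h3 : g n < δ := hcon n hn
    have h4 : g n ^ 2 ≤ B * |g n| := by nlinarith [sq_abs (g n), abs_nonneg (g n), hb n]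
    rcases le_or_gt 0 (g n) with h5 | h5
    · rw [abs_of_nonneg h5] at h4
      nlinarith
    · rw [abs_of_neg h5] at h4
      nlinarith
  set C₁ : ℝ := ∑ n ∈ Finset.range M₀, (g n) ^ 2 with hC₁
  set C₂ : ℝ := ∑ n ∈ Finset.range M₀, g n with hC₂
  have hsum : ∀ K : ℕ, M₀ ≤ K →
      (∑ n ∈ Finset.range K, (g n) ^ 2)
        ≤ C₁ + B * (2 * δ) * ((K : ℝ) - M₀) - B * ((∑ n ∈ Finset.range K, g n) - C₂) := by
    intro K hK
    have hsplit : ∑ n ∈ Finset.range K, (g n) ^ 2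
        = C₁ + ∑ n ∈ Finset.Ico M₀ K, (g n) ^ 2 := by
      rw [hC₁, Finset.range_eq_Ico, Finset.range_eq_Ico]
      exact (Finset.sum_Ico_consecutive _ (Nat.zero_le _) hK).symm
    have hsplit2 : ∑ n ∈ Finset.range K, g n = C₂ + ∑ n ∈ Finset.Ico M₀ K, g n := by
      rw [hC₂, Finset.range_eq_Ico, Finset.range_eq_Ico]
      exact (Finset.sum_Ico_consecutive _ (Nat.zero_le _) hK).symm
    rw [hsplit, hsplit2]
    have hb2 : ∑ n ∈ Finset.Ico M₀ K, (g n) ^ 2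
        ≤ ∑ n ∈ Finset.Ico M₀ K, (B * (2 * δ) - B * g n) := by
      apply Finset.sum_le_sum
      intro n hn
      exact hpt n (Finset.mem_Ico.mp hn).1
    have hcard : (Finset.Ico M₀ K).card = K - M₀ := Nat.card_Ico M₀ K
    have heq2 : ∑ n ∈ Finset.Ico M₀ K, (B * (2 * δ) - B * g n)
        = B * (2 * δ) * ((K : ℝ) - M₀) - B * ∑ n ∈ Finset.Ico M₀ K, g n := by
      rw [Finset.sum_sub_distrib, Finset.sum_const, hcard, ← Finset.mul_sum,
        nsmul_eq_mul, Nat.cast_sub hK]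
      ring
    linarith [hb2.trans_eq heq2]
  have hineq : ∀ᶠ K : ℕ in atTop,
      (∑ n ∈ Finset.range K, (g n) ^ 2) / K
        ≤ (C₁ + B * C₂) / K + B * (2 * δ) * (1 - (M₀ : ℝ) / K)
          - B * ((∑ n ∈ Finset.range K, g n) / K) := by
    filter_upwards [eventually_ge_atTop (max M₀ 1)] with K hK
    have hK1 : (1 : ℕ) ≤ K := le_trans (le_max_right _ _) hK
    have hKpos : (0 : ℝ) < K := by exact_mod_cast hK1
    have hKM : M₀ ≤ K := le_trans (le_max_left _ _) hK
    have hd := (div_le_div_iff_of_pos_right hKpos).mpr (hsum K hKM)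
    refine hd.trans_eq ?_
    field_simp
    ring
  have hRHS : Tendsto (fun K : ℕ => (C₁ + B * C₂) / K + B * (2 * δ) * (1 - (M₀ : ℝ) / K)
      - B * ((∑ n ∈ Finset.range K, g n) / K)) atTop (𝓝 (0 + B * (2 * δ) * (1 - 0) - B * 0)) := by
    refine Tendsto.sub (Tendsto.add ?_ ?_) ?_
    · exact tendsto_const_div_atTop_nhds_zero_nat _
    · exact (tendsto_const_nhds.sub (tendsto_const_div_atTop_nhds_zero_nat _)).const_mul _
    · exact h1.const_mul _
  have hle : V ≤ 0 + B * (2 * δ) * (1 - 0) - B * 0 :=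
    le_of_tendsto_of_tendsto h2 hRHS hineq
  have hBne : B ≠ 0 := ne_of_gt hB0
  have hval : 0 + B * (2 * δ) * (1 - 0) - B * 0 = V / 2 := by
    rw [hδ]
    field_simp
    ring
  rw [hval] at hle
  linarith

lemma unbounded_re {N : ℕ} (lam : Fin N → ℂ) (hinj : Function.Injective lam)
    (hgt : ∀ k, 1 < ‖lam k‖)
    (hconj : ∀ j k, lam j ≠ starRingEnd ℂ (lam k))
    (b : Fin N → ℂ) (hb : b ≠ 0) (C : ℝ) :
    ∃ n : ℕ, C < (∑ k, b k * lam k ^ n).re := by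
  classical
  set S : Finset (Fin N) := Finset.univ.filter (fun k => b k ≠ 0) with hS
  have hSne : S.Nonempty := by
    rcases Function.ne_iff.mp hb with ⟨k, hk⟩
    exact ⟨k, by simp only [hS, Finset.mem_filter, Finset.mem_univ, true_and]; exact hk⟩
  set r : ℝ := S.sup' hSne (fun k => ‖lam k‖) with hr
  have hr1 : 1 < r := by
    obtain ⟨k, hk⟩ := hSne
    rw [hr]
    exact lt_of_lt_of_le (hgt k) (Finset.le_sup' (fun k => ‖lam k‖) hk)
  have hr0 : (0:ℝ) < r := by linarith
  have hrle : ∀ k ∈ S, ‖lam k‖ ≤ r := by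
    intro k hk
    rw [hr]
    exact Finset.le_sup' (fun k => ‖lam k‖) hk
  set K : Finset (Fin N) := S.filter (fun k => ‖lam k‖ = r) with hK
  have hKne : K.Nonempty := by
    obtain ⟨k, hk, hke⟩ := Finset.exists_mem_eq_sup' hSne (fun k => ‖lam k‖)
    exact ⟨k, Finset.mem_filter.mpr ⟨hk, by rw [hr]; exact hke.symm⟩⟩
  set μ : Fin N → ℂ := fun k => lam k / (r:ℂ) with hμ
  have hrC : ((r:ℝ):ℂ) ≠ 0 := by exact_mod_cast ne_of_gt hr0
  have hnorm : ∀ k ∈ K, ‖μ k‖ = 1 := by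
    intro k hk
    have : ‖lam k‖ = r := (Finset.mem_filter.mp hk).2
    rw [hμ]
    simp only [norm_div, this, Complex.norm_real, Real.norm_eq_abs, abs_of_pos hr0]
    field_simp
  have hμinj : ∀ i ∈ K, ∀ j ∈ K, μ i = μ j → i = j := by
    intro i _ j _ h
    apply hinj
    have := congrArg (fun z => z * (r:ℂ)) h
    simpa [hμ, div_mul_cancel₀, hrC] using this
  have hμmul : ∀ i ∈ K, ∀ j ∈ K, μ i * μ j ≠ 1 := by
    intro i hi j hj h
    have hrr : lam i * lam j = ((r:ℂ))^2 := by
      have : lam i / r * (lam j / r) = 1 := h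
      field_simp at this
      linear_combination this
    -- lam i = conj (lam j)
    apply hconj i j
    have hnj : ‖lam j‖ = r := (Finset.mem_filter.mp hj).2
    have hjc : lam j * starRingEnd ℂ (lam j) = ((r:ℂ))^2 := by
      rw [Complex.mul_conj, Complex.normSq_eq_norm_sq, hnj]
      push_cast
      ring
    have hjne : lam j ≠ 0 := by
      intro h0
      rw [h0] at hnj
      simp at hnj
      linarith
    have := hrr.trans hjc.symm
    exact mul_right_cancel₀ hjne (this.trans (mul_comm _ _))
  obtain ⟨havg, hvar⟩ := cesaro_variance K b μ hnorm hμinj hμmul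
  set g : ℕ → ℝ := fun n => (∑ i ∈ K, b i * μ i ^ n).re with hg
  set B : ℝ := ∑ i ∈ K, ‖b i‖ with hB
  have hBpos : 0 < B := by
    obtain ⟨k, hk⟩ := hKne
    have hbk : b k ≠ 0 := by
      have := (Finset.mem_filter.mp hk).1
      rw [hS] at this
      exact (Finset.mem_filter.mp this).2
    refine Finset.sum_pos' (fun i _ => by positivity) ⟨k, hk, ?_⟩
    simpa using hbk
  set V : ℝ := (∑ i ∈ K, ‖b i‖ ^ 2) / 2 with hV
  have hVpos : 0 < V := by
    obtain ⟨k, hk⟩ := hKne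
    have hbk : b k ≠ 0 := by
      have := (Finset.mem_filter.mp hk).1
      rw [hS] at this
      exact (Finset.mem_filter.mp this).2
    have : 0 < ∑ i ∈ K, ‖b i‖ ^ 2 := by
      refine Finset.sum_pos' (fun i _ => by positivity) ⟨k, hk, ?_⟩
      have : ‖b k‖ ≠ 0 := by simpa using hbk
      positivity
    rw [hV]
    linarith
  have hgb : ∀ n, |g n| ≤ B := by
    intro n
    calc |g n| ≤ ‖∑ i ∈ K, b i * μ i ^ n‖ := by
          exact Complex.abs_re_le_norm _
      _ ≤ ∑ i ∈ K, ‖b i * μ i ^ n‖ := norm_sum_le _ _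
      _ = B := by
          rw [hB]
          apply Finset.sum_congr rfl
          intro i hi
          rw [norm_mul, norm_pow, hnorm i hi, one_pow, mul_one]
  have hlarge := exists_large_of_cesaro g B V hBpos hVpos hgb havg hvar
  set δ : ℝ := V / (4 * B) with hδ
  have hδpos : 0 < δ := by positivity
  set t : ℕ → ℝ := fun n => ∑ k ∈ S \ K, ‖b k‖ * (‖lam k‖ / r) ^ n with ht
  have ht0 : Tendsto t atTop (𝓝 0) := by
    have : Tendsto (fun n : ℕ => ∑ k ∈ S \ K, ‖b k‖ * (‖lam k‖ / r) ^ n)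
        atTop (𝓝 (∑ k ∈ S \ K, ‖b k‖ * 0)) := by
      apply tendsto_finset_sum
      intro k hk
      apply Tendsto.const_mul
      apply tendsto_pow_atTop_nhds_zero_of_lt_one (by positivity)
      rw [div_lt_one hr0]
      rcases Finset.mem_sdiff.mp hk with ⟨hkS, hkK⟩
      refine lt_of_le_of_ne (hrle k hkS) ?_
      intro he
      exact hkK (by rw [hK]; exact Finset.mem_filter.mpr ⟨hkS, he⟩)
    simpa using this
  -- splitting of the full sum
  have hsum_univ : ∀ n : ℕ, (∑ k, b k * lam k ^ n)
      = (∑ k ∈ K, b k * lam k ^ n) + ∑ k ∈ S \ K, b k * lam k ^ n := by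
    intro n
    have h1 : ∑ k, b k * lam k ^ n = ∑ k ∈ S, b k * lam k ^ n := by
      symm
      apply Finset.sum_subset (Finset.subset_univ S)
      intro k _ hk
      have hb0 : b k = 0 := by
        by_contra hc
        exact hk (by rw [hS]; exact Finset.mem_filter.mpr ⟨Finset.mem_univ _, hc⟩)
      rw [hb0, zero_mul]
    rw [h1, ← Finset.sum_filter_add_sum_filter_not S (fun k => ‖lam k‖ = r)
      (fun k => b k * lam k ^ n)]
    congr 1
    apply Finset.sum_congr _ (fun _ _ => rfl)
    rw [Finset.filter_not]
  have hKre : ∀ n : ℕ, (∑ k ∈ K, b k * lam k ^ n).re = r ^ n * g n := by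
    intro n
    have he : ∑ k ∈ K, b k * lam k ^ n = (((r ^ n : ℝ)):ℂ) * ∑ i ∈ K, b i * μ i ^ n := by
      rw [Finset.mul_sum]
      apply Finset.sum_congr rfl
      intro k _
      have hlam : lam k = (r:ℂ) * μ k := by
        rw [hμ]
        field_simp
      rw [hlam, mul_pow]
      push_cast
      ring
    rw [he, Complex.re_ofReal_mul]
  have hrest : ∀ n : ℕ, ‖∑ k ∈ S \ K, b k * lam k ^ n‖ ≤ r ^ n * t n := by
    intro n
    calc ‖∑ k ∈ S \ K, b k * lam k ^ n‖ ≤ ∑ k ∈ S \ K, ‖b k * lam k ^ n‖ := norm_sum_le _ _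
      _ = r ^ n * t n := by
          rw [ht, Finset.mul_sum]
          apply Finset.sum_congr rfl
          intro k hk
          rw [norm_mul, norm_pow]
          rw [div_pow]
          field_simp
  have hmain : ∀ n : ℕ, r ^ n * g n - r ^ n * t n ≤ (∑ k, b k * lam k ^ n).re := by
    intro n
    rw [hsum_univ n, Complex.add_re, hKre n]
    have h2 : -(r ^ n * t n) ≤ (∑ k ∈ S \ K, b k * lam k ^ n).re := by
      have habs : |(∑ k ∈ S \ K, b k * lam k ^ n).re| ≤ r ^ n * t n := by
        refine le_trans ?_ (hrest n)
        exact Complex.abs_re_le_norm _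
      linarith [neg_abs_le ((∑ k ∈ S \ K, b k * lam k ^ n).re)]
    linarith
  -- choose n
  have hM1 : ∀ᶠ n : ℕ in atTop, t n < δ / 2 :=
    ht0.eventually (gt_mem_nhds (by positivity : (0:ℝ) < δ / 2))
  have hpow : Tendsto (fun n : ℕ => r ^ n) atTop atTop :=
    tendsto_pow_atTop_atTop_of_one_lt hr1
  have hM2 : ∀ᶠ n : ℕ in atTop, 2 * (|C| + 1) / δ ≤ r ^ n :=
    hpow.eventually_ge_atTop _
  obtain ⟨M₀, hM₀⟩ := Filter.eventually_atTop.mp (hM1.and hM2)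
  obtain ⟨n, hn1, hn2⟩ := hlarge M₀
  obtain ⟨htn, hrn⟩ := hM₀ n hn1
  refine ⟨n, ?_⟩
  have hRpos : 0 < r ^ n := pow_pos hr0 n
  have hgδ : δ ≤ g n := hn2
  have hkey : r ^ n * (δ / 2) ≤ r ^ n * g n - r ^ n * t n := by
    have h3 : δ / 2 ≤ g n - t n := by linarith
    calc r ^ n * (δ / 2) ≤ r ^ n * (g n - t n) := by
          exact mul_le_mul_of_nonneg_left h3 hRpos.le
      _ = r ^ n * g n - r ^ n * t n := by ring
  have hkey2 : 2 * (|C| + 1) / δ * (δ / 2) ≤ r ^ n * (δ / 2) := by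
    apply mul_le_mul_of_nonneg_right hrn
    linarith
  have hδne : δ ≠ 0 := ne_of_gt hδpos
  have hval : 2 * (|C| + 1) / δ * (δ / 2) = |C| + 1 := by
    have h5 : 2 * (|C| + 1) / δ * (δ / 2) = (|C| + 1) * (δ / δ) := by ring
    rw [h5, div_self hδne, mul_one]
  have := hmain n
  have hCabs : C ≤ |C| := le_abs_self C
  linarith

/-- `v` is a convex-cyclic vector for the matrix `T` on `ℂ^N`. -/
def IsConvexCyclicVector {N : ℕ} (T : Matrix (Fin N) (Fin N) ℂ) (v : Fin N → ℂ) : Prop :=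
  Dense {w : Fin N → ℂ | ∃ p, IsConvexPoly p ∧ (Polynomial.aeval T p).mulVec v = w}

lemma isConvexPoly_pad {p : Polynomial ℂ} (h : IsConvexPoly p) :
    ∃ n₀ : ℕ, ∀ L : ℕ, n₀ ≤ L → ∃ a : ℕ → ℝ, (∀ k, 0 ≤ a k) ∧
      (∑ k ∈ Finset.range (L + 1), a k) = 1 ∧
      p = ∑ k ∈ Finset.range (L + 1), Polynomial.C ((a k : ℝ) : ℂ) * Polynomial.X ^ k := by
  obtain ⟨n, a, ha0, ha1, hap⟩ := h
  refine ⟨n, fun L hL => ⟨fun k => if k ∈ Finset.range (n + 1) then a k else 0, ?_, ?_, ?_⟩⟩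
  · intro k
    dsimp only
    split_ifs
    exacts [ha0 k, le_refl 0]
  · rw [← Finset.sum_subset (Finset.range_subset_range.mpr (by omega : n + 1 ≤ L + 1))
      (fun x _ hx => if_neg hx)]
    rw [← ha1]
    exact Finset.sum_congr rfl (fun x hx => by rw [if_pos hx])
  · rw [← Finset.sum_subset (Finset.range_subset_range.mpr (by omega : n + 1 ≤ L + 1))
      (fun x _ hx => by dsimp only; rw [if_neg hx]; simp)]
    rw [hap]
    exact Finset.sum_congr rfl (fun x hx => by dsimp only; rw [if_pos hx])

lemma isConvexPoly_X_pow (n : ℕ) : IsConvexPoly ((Polynomial.X : Polynomial ℂ) ^ n) := by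
  refine ⟨n, fun k => if k = n then 1 else 0, ?_, ?_, ?_⟩
  · intro k
    dsimp only
    split_ifs <;> norm_num
  · have h2 : ∑ k ∈ Finset.range (n+1), (if k = n then (1:ℝ) else 0) = 1 := by
      rw [Finset.sum_ite_eq' (Finset.range (n+1)) n (fun _ => (1:ℝ))]
      rw [if_pos (Finset.self_mem_range_succ n)]
    simpa using h2
  · have h3 : ∀ k ∈ Finset.range (n+1),
        Polynomial.C ((((if k = n then (1:ℝ) else 0)) : ℝ) : ℂ) * Polynomial.X ^ k
          = if k = n then (Polynomial.X : Polynomial ℂ) ^ k else 0 := by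
      intro k _
      split_ifs with h
      · simp
      · simp
    rw [Finset.sum_congr rfl h3, Finset.sum_ite_eq' (Finset.range (n+1)) n
      (fun k => (Polynomial.X : Polynomial ℂ) ^ k), if_pos (Finset.self_mem_range_succ n)]

lemma isConvexPoly_one : IsConvexPoly (1 : Polynomial ℂ) := by
  simpa using isConvexPoly_X_pow 0

lemma isConvexPoly_combo {p q : Polynomial ℂ} (hp : IsConvexPoly p) (hq : IsConvexPoly q)
    {s t : ℝ} (hs : 0 ≤ s) (ht : 0 ≤ t) (hst : s + t = 1) :
    IsConvexPoly (Polynomial.C ((s:ℝ):ℂ) * p + Polynomial.C ((t:ℝ):ℂ) * q) := by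
  obtain ⟨n₀, H⟩ := isConvexPoly_pad hp
  obtain ⟨m₀, H'⟩ := isConvexPoly_pad hq
  obtain ⟨a, ha0, ha1, hap⟩ := H (max n₀ m₀) (le_max_left _ _)
  obtain ⟨a', ha0', ha1', hap'⟩ := H' (max n₀ m₀) (le_max_right _ _)
  refine ⟨max n₀ m₀, fun k => s * a k + t * a' k, ?_, ?_, ?_⟩
  · intro k
    have := ha0 k
    have := ha0' k
    positivity
  · rw [Finset.sum_add_distrib, ← Finset.mul_sum, ← Finset.mul_sum, ha1, ha1']
    linarith
  · rw [hap, hap', Finset.mul_sum, Finset.mul_sum, ← Finset.sum_add_distrib]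
    apply Finset.sum_congr rfl
    intro k _
    simp only [Complex.ofReal_add, Complex.ofReal_mul, map_add, map_mul]
    ring

lemma aeval_convexPoly_norm_le {p : Polynomial ℂ} (h : IsConvexPoly p) (z : ℂ)
    (hz : ‖z‖ ≤ 1) : ‖(Polynomial.aeval z) p‖ ≤ 1 := by
  obtain ⟨n, a, ha0, ha1, hap⟩ := h
  rw [hap]
  simp only [map_sum, map_mul, Polynomial.aeval_C, Polynomial.aeval_X_pow,
    Algebra.algebraMap_self, RingHom.id_apply]
  calc ‖∑ k ∈ Finset.range (n+1), ((a k : ℝ) : ℂ) * z ^ k‖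
      ≤ ∑ k ∈ Finset.range (n+1), ‖((a k : ℝ) : ℂ) * z ^ k‖ := norm_sum_le _ _
    _ ≤ ∑ k ∈ Finset.range (n+1), a k := by
        apply Finset.sum_le_sum
        intro k _
        rw [norm_mul, norm_pow, Complex.norm_real, Real.norm_eq_abs, abs_of_nonneg (ha0 k)]
        calc a k * ‖z‖ ^ k ≤ a k * 1 := by
              apply mul_le_mul_of_nonneg_left _ (ha0 k)
              exact pow_le_one₀ (norm_nonneg z) hz
          _ = a k := mul_one _
    _ = 1 := ha1

lemma aeval_convexPoly_conj {p : Polynomial ℂ} (h : IsConvexPoly p) (z : ℂ) :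
    (Polynomial.aeval (starRingEnd ℂ z)) p = starRingEnd ℂ ((Polynomial.aeval z) p) := by
  obtain ⟨n, a, ha0, ha1, hap⟩ := h
  rw [hap]
  simp only [map_sum, map_mul, Polynomial.aeval_C, Polynomial.aeval_X_pow, map_pow,
    Algebra.algebraMap_self, RingHom.id_apply]
  apply Finset.sum_congr rfl
  intro k _
  rw [Complex.conj_ofReal, Polynomial.aeval_X, Polynomial.aeval_X]

lemma mulVec_aeval_diagonal_s11 {N : ℕ} (lam : Fin N → ℂ) (v : Fin N → ℂ) (p : Polynomial ℂ) :
    (Polynomial.aeval (Matrix.diagonal lam) p).mulVec v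
      = fun k => (Polynomial.aeval (lam k)) p * v k := by
  have h1 : (Polynomial.aeval (Matrix.diagonal lam)) p
      = Matrix.diagonal (fun k => (Polynomial.aeval (lam k)) p) := by
    have h2 := Polynomial.aeval_algHom_apply (Matrix.diagonalAlgHom (n := Fin N) ℂ) lam p
    rw [Matrix.diagonalAlgHom_apply, Matrix.diagonalAlgHom_apply] at h2
    have h3 : (Polynomial.aeval lam) p = fun k => (Polynomial.aeval (lam k)) p :=
      funext (fun k => (Polynomial.aeval_algHom_apply (Pi.evalAlgHom ℂ (fun _ => ℂ) k) lam p).symm)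
    rw [h2, h3]
  funext i
  rw [h1, Matrix.mulVec_diagonal]

lemma not_dense_helper {α : Type*} [TopologicalSpace α] {S F : Set α} (hSF : S ⊆ F)
    (hF : IsClosed F) {y : α} (hy : y ∉ F) : ¬ Dense S :=
  fun h => hy ((hF.closure_subset_iff.mpr hSF) (h y))

lemma dense_main {N : ℕ} (lam : Fin N → ℂ) (hinj : Function.Injective lam)
    (hgt : ∀ k, 1 < ‖lam k‖)
    (hconj : ∀ j k, lam j ≠ starRingEnd ℂ (lam k))
    (v : Fin N → ℂ) (hv : ∀ i, v i ≠ 0) :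
    Dense {w : Fin N → ℂ | ∃ p, IsConvexPoly p ∧
      (Polynomial.aeval (Matrix.diagonal lam) p).mulVec v = w} := by
  classical
  set S : Set (Fin N → ℂ) := {w | ∃ p, IsConvexPoly p ∧
    (Polynomial.aeval (Matrix.diagonal lam) p).mulVec v = w} with hSdef
  have hmem : ∀ p, IsConvexPoly p → (fun k => (Polynomial.aeval (lam k)) p * v k) ∈ S := by
    intro p hp
    exact ⟨p, hp, mulVec_aeval_diagonal_s11 lam v p⟩
  have hconv : Convex ℝ S := by
    rintro x ⟨p, hp, hx⟩ y ⟨q, hq, hy⟩ s t hs ht hst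
    refine ⟨Polynomial.C ((s:ℝ):ℂ) * p + Polynomial.C ((t:ℝ):ℂ) * q,
      isConvexPoly_combo hp hq hs ht hst, ?_⟩
    rw [mulVec_aeval_diagonal_s11]
    funext i
    have hxi : x i = (Polynomial.aeval (lam i)) p * v i := by
      rw [← hx, mulVec_aeval_diagonal_s11]
    have hyi : y i = (Polynomial.aeval (lam i)) q * v i := by
      rw [← hy, mulVec_aeval_diagonal_s11]
    show (Polynomial.aeval (lam i)) (Polynomial.C ((s:ℝ):ℂ) * p + Polynomial.C ((t:ℝ):ℂ) * q) * v i
      = (s • x + t • y) i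
    rw [map_add, map_mul, map_mul, Polynomial.aeval_C, Polynomial.aeval_C]
    have : (s • x + t • y) i = ((s:ℝ):ℂ) * x i + ((t:ℝ):ℂ) * y i := by
      simp only [Pi.add_apply, Pi.smul_apply, Complex.real_smul]
    rw [this, hxi, hyi]
    simp only [Algebra.algebraMap_self, RingHom.id_apply]
    ring
  by_contra hnd
  have hcl : ∃ y, y ∉ closure S := by
    by_contra h
    push_neg at h
    exact hnd (fun x => h x)
  obtain ⟨y, hy⟩ := hcl
  obtain ⟨f, u, hfu, huy⟩ := geometric_hahn_banach_closed_point
    (hconv.closure) isClosed_closure hy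
  set b : Fin N → ℂ := fun k =>
    ((f (Pi.single k 1) : ℝ) : ℂ) + ((f (Pi.single k Complex.I) : ℝ) : ℂ) * Complex.I with hb
  have hsingle : ∀ (k : Fin N) (z : ℂ),
      (Pi.single k z : Fin N → ℂ)
        = z.re • (Pi.single k 1 : Fin N → ℂ) + z.im • (Pi.single k Complex.I : Fin N → ℂ) := by
    intro k z
    funext j
    by_cases h : j = k
    · subst h
      simp only [Pi.single_eq_same, Pi.add_apply, Pi.smul_apply, Complex.real_smul]
      rw [mul_one]
      exact (Complex.re_add_im z).symm
    · simp [Pi.single_eq_of_ne h]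
  have hrepr : ∀ w : Fin N → ℂ, f w = (∑ k, starRingEnd ℂ (b k) * w k).re := by
    intro w
    conv_lhs => rw [← Finset.univ_sum_single w]
    rw [map_sum, Complex.re_sum]
    apply Finset.sum_congr rfl
    intro k _
    rw [hsingle k (w k), map_add, map_smul, map_smul]
    rw [hb]
    simp only [smul_eq_mul]
    rw [map_add, map_mul, Complex.conj_ofReal, Complex.conj_ofReal, Complex.conj_I]
    rw [add_mul, Complex.add_re]
    simp only [Complex.mul_re, Complex.ofReal_re, Complex.ofReal_im, Complex.neg_re,
      Complex.neg_im, Complex.I_re, Complex.I_im, Complex.mul_im]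
    ring
  -- b ≠ 0
  have hvS : v ∈ S := by
    refine ⟨1, isConvexPoly_one, ?_⟩
    rw [map_one, Matrix.one_mulVec]
  have hbne : b ≠ 0 := by
    intro h0
    have h1 : f v < u := hfu v (subset_closure hvS)
    have h2 : ∀ w, f w = 0 := by
      intro w
      rw [hrepr w]
      simp [h0]
    rw [h2 v] at h1
    rw [h2 y] at huy
    linarith
  set c : Fin N → ℂ := fun k => starRingEnd ℂ (b k) * v k with hc
  have hcne : c ≠ 0 := by
    obtain ⟨k, hk⟩ := Function.ne_iff.mp hbne
    apply Function.ne_iff.mpr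
    refine ⟨k, ?_⟩
    simp only [hc, Pi.zero_apply]
    exact mul_ne_zero (star_ne_zero.mpr (by simpa using hk)) (hv k)
  obtain ⟨n, hn⟩ := unbounded_re lam hinj hgt hconj c hcne u
  -- but x_n ∈ S yields contradiction
  have hxnS : (fun k => lam k ^ n * v k) ∈ S := by
    have := hmem (Polynomial.X ^ n) (isConvexPoly_X_pow n)
    simpa [Polynomial.aeval_X_pow] using this
  have hlt : f (fun k => lam k ^ n * v k) < u := hfu _ (subset_closure hxnS)
  rw [hrepr] at hlt
  have heq : (∑ k, starRingEnd ℂ (b k) * (lam k ^ n * v k))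
      = ∑ k, c k * lam k ^ n := by
    apply Finset.sum_congr rfl
    intro k _
    rw [hc]
    ring
  rw [heq] at hlt
  linarith

/-- Convex-cyclicity of complex diagonal matrices. -/
theorem diagonal_convexCyclic_iff {N : ℕ} (lam : Fin N → ℂ)
    (T : Matrix (Fin N) (Fin N) ℂ) (hT : T = Matrix.diagonal lam) :
    ((∃ v, IsConvexCyclicVector T v) ↔
      (Function.Injective lam ∧ (∀ k, 1 < ‖lam k‖) ∧
        ∀ j k, lam j ≠ starRingEnd ℂ (lam k))) ∧
    ((Function.Injective lam ∧ (∀ k, 1 < ‖lam k‖) ∧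
        ∀ j k, lam j ≠ starRingEnd ℂ (lam k)) →
      ∀ v, IsConvexCyclicVector T v ↔ ∀ i, v i ≠ 0) := by
  subst hT
  have hv0 : ∀ (v : Fin N → ℂ) (i : Fin N), v i = 0 →
      ¬ IsConvexCyclicVector (Matrix.diagonal lam) v := by
    intro v i hvi
    refine not_dense_helper (F := {w : Fin N → ℂ | w i = 0}) ?_
      (isClosed_eq (continuous_apply i) continuous_const) (y := (Pi.single i 1 : Fin N → ℂ)) ?_
    · rintro w ⟨p, hp, rfl⟩
      show ((Polynomial.aeval (Matrix.diagonal lam)) p).mulVec v i = 0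
      rw [mulVec_aeval_diagonal_s11]
      simp [hvi]
    · show ¬ ((Pi.single i 1 : Fin N → ℂ) i = 0)
      simp
  have hnec1 : ∀ (v : Fin N → ℂ) (j k : Fin N), j ≠ k → lam j = lam k →
      ¬ IsConvexCyclicVector (Matrix.diagonal lam) v := by
    intro v j k hjk hlamjk
    by_cases hvj : v j = 0
    · exact hv0 v j hvj
    by_cases hvk : v k = 0
    · exact hv0 v k hvk
    refine not_dense_helper (F := {w : Fin N → ℂ | w j * v k = w k * v j}) ?_
      (isClosed_eq ((continuous_apply j).mul continuous_const)
        ((continuous_apply k).mul continuous_const)) (y := (Pi.single j (v j) : Fin N → ℂ)) ?_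
    · rintro w ⟨p, hp, rfl⟩
      show ((Polynomial.aeval (Matrix.diagonal lam)) p).mulVec v j * v k
        = ((Polynomial.aeval (Matrix.diagonal lam)) p).mulVec v k * v j
      rw [mulVec_aeval_diagonal_s11]
      simp only
      rw [hlamjk]
      ring
    · show ¬ ((Pi.single j (v j) : Fin N → ℂ) j * v k = (Pi.single j (v j) : Fin N → ℂ) k * v j)
      rw [Pi.single_eq_same, Pi.single_eq_of_ne (Ne.symm hjk), zero_mul]
      exact mul_ne_zero hvj hvk
  have hnec2 : ∀ (v : Fin N → ℂ) (k : Fin N), ‖lam k‖ ≤ 1 →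
      ¬ IsConvexCyclicVector (Matrix.diagonal lam) v := by
    intro v k hk
    refine not_dense_helper (F := {w : Fin N → ℂ | ‖w k‖ ≤ ‖v k‖}) ?_
      (isClosed_le ((continuous_apply k).norm) continuous_const)
      (y := (Pi.single k ((‖v k‖ + 1 : ℝ) : ℂ) : Fin N → ℂ)) ?_
    · rintro w ⟨p, hp, rfl⟩
      show ‖((Polynomial.aeval (Matrix.diagonal lam)) p).mulVec v k‖ ≤ ‖v k‖
      rw [mulVec_aeval_diagonal_s11]
      simp only
      rw [norm_mul]
      calc ‖(Polynomial.aeval (lam k)) p‖ * ‖v k‖ ≤ 1 * ‖v k‖ := by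
            apply mul_le_mul_of_nonneg_right (aeval_convexPoly_norm_le hp _ hk) (norm_nonneg _)
        _ = ‖v k‖ := one_mul _
    · show ¬ (‖(Pi.single k ((‖v k‖ + 1 : ℝ) : ℂ) : Fin N → ℂ) k‖ ≤ ‖v k‖)
      rw [Pi.single_eq_same, Complex.norm_real, Real.norm_eq_abs,
        abs_of_nonneg (by positivity)]
      linarith
  have hnec3 : ∀ (v : Fin N → ℂ) (j k : Fin N), lam j = starRingEnd ℂ (lam k) →
      ¬ IsConvexCyclicVector (Matrix.diagonal lam) v := by
    intro v j k hlamjk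
    by_cases hvj : v j = 0
    · exact hv0 v j hvj
    by_cases hvk : v k = 0
    · exact hv0 v k hvk
    have hcont : Continuous (fun w : Fin N → ℂ => starRingEnd ℂ (w k) * v j) := by
      have : (fun w : Fin N → ℂ => starRingEnd ℂ (w k) * v j)
          = fun w : Fin N → ℂ => star (w k) * v j := rfl
      rw [this]
      exact (continuous_star.comp (continuous_apply k)).mul continuous_const
    have hsub : {w : Fin N → ℂ | ∃ p, IsConvexPoly p ∧
        (Polynomial.aeval (Matrix.diagonal lam) p).mulVec v = w}
        ⊆ {w : Fin N → ℂ | w j * starRingEnd ℂ (v k) = starRingEnd ℂ (w k) * v j} := by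
      rintro w ⟨p, hp, rfl⟩
      show ((Polynomial.aeval (Matrix.diagonal lam)) p).mulVec v j * starRingEnd ℂ (v k)
        = starRingEnd ℂ (((Polynomial.aeval (Matrix.diagonal lam)) p).mulVec v k) * v j
      rw [mulVec_aeval_diagonal_s11]
      simp only
      rw [hlamjk, aeval_convexPoly_conj hp, map_mul]
      ring
    have hclosed : IsClosed {w : Fin N → ℂ | w j * starRingEnd ℂ (v k) = starRingEnd ℂ (w k) * v j} :=
      isClosed_eq ((continuous_apply j).mul continuous_const) hcont
    by_cases hjk : j = k
    · subst hjk
      refine not_dense_helper hsub hclosed (y := (Pi.single j (Complex.I * v j) : Fin N → ℂ)) ?_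
      show ¬ ((Pi.single j (Complex.I * v j) : Fin N → ℂ) j * starRingEnd ℂ (v j)
        = starRingEnd ℂ ((Pi.single j (Complex.I * v j) : Fin N → ℂ) j) * v j)
      rw [Pi.single_eq_same, map_mul, Complex.conj_I]
      intro h
      have h2 : (2 * Complex.I) * (v j * starRingEnd ℂ (v j)) = 0 := by
        linear_combination h
      have h3 : starRingEnd ℂ (v j) ≠ 0 := star_ne_zero.mpr hvj
      simp only [mul_eq_zero] at h2
      rcases h2 with (h2 | h2) | h2
      · norm_num at h2
      · exact Complex.I_ne_zero h2
      · rcases h2 with h4 | h4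
        · exact hvj h4
        · exact h3 h4
    · refine not_dense_helper hsub hclosed (y := (Pi.single j (v j) : Fin N → ℂ)) ?_
      show ¬ ((Pi.single j (v j) : Fin N → ℂ) j * starRingEnd ℂ (v k)
        = starRingEnd ℂ ((Pi.single j (v j) : Fin N → ℂ) k) * v j)
      rw [Pi.single_eq_same, Pi.single_eq_of_ne (Ne.symm hjk), map_zero, zero_mul]
      exact mul_ne_zero hvj (star_ne_zero.mpr hvk)
  constructor
  · constructor
    · rintro ⟨v, hcv⟩
      refine ⟨?_, ?_, ?_⟩
      · intro j k hjk
        by_contra hne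
        exact hnec1 v j k hne hjk hcv
      · intro k
        by_contra hle
        push_neg at hle
        exact hnec2 v k hle hcv
      · intro j k hjk
        exact hnec3 v j k hjk hcv
    · rintro ⟨h1, h2, h3⟩
      exact ⟨fun _ => 1,
        dense_main lam h1 h2 h3 _
          (fun i => one_ne_zero)⟩
  · rintro ⟨h1, h2, h3⟩ v
    constructor
    · intro hcv i
      by_contra hvi
      exact hv0 v i hvi hcv
    · intro hv
      exact dense_main lam h1 h2 h3 v hv
end

section
/- Let f₁, ..., f_N be complex numbers, not all zero, r > 1 a real number, and θ₁, ..., θ_N real numbers satisfying θ_i ≢ ±θ_j (mod 2π) for i ≠ j, and θ_j ≢ 0 (mod π) for all j. Then sup_{n ≥ 1} rⁿ · Re(Σ_{k=1}^N e^{i n θ_k} f_k) = +∞. -/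
open Filter Finset Complex

lemma cesaro_pow (w : ℂ) (hw : ‖w‖ = 1) :
    Tendsto (fun M : ℕ => (∑ n ∈ Finset.range M, w ^ n) / M) atTop
      (nhds (if w = 1 then 1 else 0)) := by
  split_ifs with h
  · subst h
    have he : ∀ᶠ M : ℕ in atTop, (1:ℂ) = (∑ n ∈ Finset.range M, (1:ℂ) ^ n) / M := by
      filter_upwards [eventually_ge_atTop 1] with M hM
      simp only [one_pow, Finset.sum_const, card_range, nsmul_eq_mul, mul_one]
      rw [div_self]
      exact_mod_cast (Nat.pos_of_ne_zero (by omega)).ne'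
    exact Tendsto.congr' he tendsto_const_nhds
  · apply squeeze_zero_norm (a := fun M : ℕ => (2 / ‖w - 1‖) / M)
    · intro M
      have heq : ‖(∑ n ∈ Finset.range M, w ^ n) / (M:ℂ)‖ = ‖w ^ M - 1‖ / ‖w - 1‖ / M := by
        rw [geom_sum_eq h, norm_div, norm_div]
        norm_num
      rw [heq, div_div, div_div]
      have h2 : ‖w ^ M - 1‖ ≤ 2 :=
        calc ‖w ^ M - 1‖ ≤ ‖w ^ M‖ + ‖(1:ℂ)‖ := norm_sub_le _ _
          _ = 2 := by rw [norm_pow, hw]; norm_num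
      gcongr
    · exact tendsto_const_div_atTop_nhds_zero_nat _

lemma cesaro_sum {ι : Type*} (s : Finset ι) (c w : ι → ℂ) (hw : ∀ i ∈ s, ‖w i‖ = 1) :
    Tendsto (fun M : ℕ => (∑ n ∈ Finset.range M, ∑ i ∈ s, c i * w i ^ n) / M) atTop
      (nhds (∑ i ∈ s, if w i = 1 then c i else 0)) := by
  have key : ∀ M : ℕ, (∑ n ∈ Finset.range M, ∑ i ∈ s, c i * w i ^ n) / M
      = ∑ i ∈ s, c i * ((∑ n ∈ Finset.range M, w i ^ n) / M) := by
    intro M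
    rw [Finset.sum_comm, Finset.sum_div]
    refine Finset.sum_congr rfl fun i _ => ?_
    rw [← Finset.mul_sum, mul_div_assoc]
  simp only [key]
  have h2 := tendsto_finset_sum s
    (fun i (hi : i ∈ s) => ((cesaro_pow (w i) (hw i hi)).const_mul (c i)))
  convert h2 using 2 with i
  refine (Finset.sum_congr rfl fun i _ => ?_)
  split_ifs <;> simp

lemma exp_I_mul_eq_one_iff (x : ℝ) :
    Complex.exp ((x:ℂ) * Complex.I) = 1 ↔ ∃ m : ℤ, x = 2 * Real.pi * m := by
  rw [Complex.exp_eq_one_iff]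
  constructor
  · rintro ⟨m, hm⟩
    refine ⟨m, ?_⟩
    have := congrArg Complex.im hm
    simp at this
    linarith
  · rintro ⟨m, hm⟩
    exact ⟨m, by rw [hm]; push_cast; ring⟩

lemma exp_I_mul_add (a b : ℝ) : Complex.exp ((a:ℂ)*Complex.I) * Complex.exp ((b:ℂ)*Complex.I)
    = Complex.exp (((a+b:ℝ):ℂ)*Complex.I) := by
  rw [← Complex.exp_add]; push_cast; ring_nf

lemma conj_exp_I_mul (a : ℝ) : (starRingEnd ℂ) (Complex.exp ((a:ℂ)*Complex.I))
    = Complex.exp (((-a:ℝ):ℂ)*Complex.I) := by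
  rw [← Complex.exp_conj]; simp

lemma re_div_nat (w : ℂ) (M : ℕ) : (w / (M:ℂ)).re = w.re / M := by
  rw [show ((M:ℂ)) = ((M:ℝ):ℂ) from by norm_num, Complex.div_ofReal_re]

lemma re_sq_eq_s13 (v : ℂ) : v.re^2 = ((v^2 + v * (starRingEnd ℂ) v).re)/2 := by
  simp [pow_two, Complex.add_re, Complex.mul_re, Complex.conj_re, Complex.conj_im]

set_option maxHeartbeats 1000000 in

lemma freq_pos (G : ℕ → ℝ) (B S δ : ℝ) (hB0 : 0 ≤ B) (hS : 0 < S)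
    (hd0 : 0 < δ) (hdB : δ ≤ B) (hc3 : 2 * B * δ ≤ S / 8)
    (hBG : ∀ n, |G n| ≤ B)
    (tG : Tendsto (fun M : ℕ => (∑ n ∈ Finset.range M, G n) / M) atTop (nhds 0))
    (tG2 : Tendsto (fun M : ℕ => (∑ n ∈ Finset.range M, (G n)^2) / M) atTop (nhds (S / 2)))
    (K : ℕ) : ∃ n : ℕ, K ≤ n ∧ δ ≤ G n := by
  by_contra hcon
  push_neg at hcon
  have e1 : ∀ᶠ M : ℕ in atTop, |(∑ n ∈ Finset.range M, G n) / M| < δ := by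
    obtain ⟨Q, hQ⟩ := Metric.tendsto_atTop.mp tG δ hd0
    filter_upwards [eventually_ge_atTop Q] with M hM
    have := hQ M hM
    rwa [Real.dist_eq, sub_zero] at this
  have e2 : ∀ᶠ M : ℕ in atTop, S / 4 < (∑ n ∈ Finset.range M, (G n)^2) / M :=
    tG2.eventually (eventually_gt_nhds (by linarith))
  have e3 : ∀ᶠ M : ℕ in atTop, (2 * B^2 * K) / (M:ℝ) < S / 16 :=
    (tendsto_const_div_atTop_nhds_zero_nat (2 * B^2 * K)).eventually
      (eventually_lt_nhds (by linarith))
  obtain ⟨M, hMK, h1, h2, h3⟩ :=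
    ((eventually_ge_atTop (K + 1)).and (e1.and (e2.and e3))).exists
  have hKM : K ≤ M := by omega
  have hM0 : (0:ℝ) < M := by
    have : 0 < M := by omega
    exact_mod_cast this
  have hK0 : (0:ℝ) ≤ K := Nat.cast_nonneg K
  have hsplitT : ∑ n ∈ Finset.range M, G n
      = ∑ n ∈ Finset.range K, G n + ∑ n ∈ Finset.Ico K M, G n := by
    have h := Finset.sum_Ico_consecutive G (Nat.zero_le K) hKM
    rw [← Finset.range_eq_Ico, ← Finset.range_eq_Ico] at h
    exact h.symm
  have hsplitT2 : ∑ n ∈ Finset.range M, (G n)^2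
      = ∑ n ∈ Finset.range K, (G n)^2 + ∑ n ∈ Finset.Ico K M, (G n)^2 := by
    have h := Finset.sum_Ico_consecutive (fun n => (G n)^2) (Nat.zero_le K) hKM
    rw [← Finset.range_eq_Ico, ← Finset.range_eq_Ico] at h
    exact h.symm
  set T : ℝ := ∑ n ∈ Finset.range M, G n with hTdef
  set U : ℝ := ∑ n ∈ Finset.range K, G n with hUdef
  set V : ℝ := ∑ n ∈ Finset.Ico K M, G n with hVdef
  set T2 : ℝ := ∑ n ∈ Finset.range M, (G n)^2 with hT2def
  set U2 : ℝ := ∑ n ∈ Finset.range K, (G n)^2 with hU2def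
  set V2 : ℝ := ∑ n ∈ Finset.Ico K M, (G n)^2 with hV2def
  have habsU : |U| ≤ B * K := by
    calc |U| ≤ ∑ n ∈ Finset.range K, |G n| := Finset.abs_sum_le_sum_abs _ _
      _ ≤ ∑ n ∈ Finset.range K, B := Finset.sum_le_sum fun n _ => hBG n
      _ = B * K := by rw [Finset.sum_const, Finset.card_range, nsmul_eq_mul, mul_comm]
  have hU2b : U2 ≤ B^2 * K := by
    calc U2 ≤ ∑ n ∈ Finset.range K, B^2 := by
          refine Finset.sum_le_sum fun n _ => ?_
          have hab := abs_le.mp (hBG n)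
          exact sq_le_sq' hab.1 hab.2
      _ = B^2 * K := by rw [Finset.sum_const, Finset.card_range, nsmul_eq_mul, mul_comm]
  have habsT : |T| ≤ δ * M := by
    have h1' : |T| / M < δ := by rwa [abs_div, _root_.abs_of_nonneg hM0.le] at h1
    exact le_of_lt ((div_lt_iff₀ hM0).mp h1')
  have hV2b : V2 ≤ δ * B * M - δ * B * K + (δ - B) * V := by
    calc V2 ≤ ∑ n ∈ Finset.Ico K M, (δ * B + (δ - B) * G n) := by
          refine Finset.sum_le_sum fun n hn => ?_
          have hlt := hcon n (Finset.mem_Ico.mp hn).1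
          have hab := abs_le.mp (hBG n)
          nlinarith [hab.1, hab.2]
      _ = δ * B * M - δ * B * K + (δ - B) * V := by
          rw [Finset.sum_add_distrib, Finset.sum_const, Nat.card_Ico, nsmul_eq_mul,
            Nat.cast_sub hKM, ← Finset.mul_sum, ← hVdef]
          ring
  have habsV : |V| ≤ δ * M + B * K := by
    have hVTU : V = T - U := by linarith
    rw [hVTU, sub_eq_add_neg]
    calc |T + -U| ≤ |T| + |(-U)| := abs_add_le _ _
      _ = |T| + |U| := by rw [abs_neg]
      _ ≤ δ * M + B * K := add_le_add habsT habsU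
  have hlin : (δ - B) * V ≤ B * δ * M + B * B * K := by
    have hV1 := (abs_le.mp habsV).1
    nlinarith [mul_nonneg (sub_nonneg.mpr hdB) (by linarith : (0:ℝ) ≤ V + (δ * M + B * K)),
      mul_nonneg (mul_nonneg hd0.le hd0.le) hM0.le,
      mul_nonneg (mul_nonneg hd0.le hB0) hK0]
  have hT2b : T2 ≤ 2 * B^2 * K + 2 * B * δ * M := by
    nlinarith [mul_nonneg (mul_nonneg hd0.le hB0) hK0]
  have hc1 : S / 4 * M < T2 := (lt_div_iff₀ hM0).mp h2
  have hc2 : 2 * B^2 * K < S / 16 * M := (div_lt_iff₀ hM0).mp h3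
  nlinarith [mul_le_mul_of_nonneg_right hc3 hM0.le, mul_pos hS hM0]

/-- A multivariable growth lemma. -/
theorem multivariable_growth {N : ℕ} (f : Fin N → ℂ) (hf : f ≠ 0)
    (r : ℝ) (hr : 1 < r) (θ : Fin N → ℝ)
    (h₁ : ∀ i j, i ≠ j →
      (¬∃ m : ℤ, θ i - θ j = 2 * Real.pi * m) ∧ (¬∃ m : ℤ, θ i + θ j = 2 * Real.pi * m))
    (h₂ : ∀ j, ¬∃ m : ℤ, θ j = Real.pi * m) :
    ∀ M : ℝ, ∃ n : ℕ, 1 ≤ n ∧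
      M < r ^ n * (∑ k, Complex.exp ((n : ℂ) * (θ k : ℂ) * Complex.I) * f k).re := by
  classical
  -- basic objects
  set z : Fin N → ℂ := fun k => Complex.exp ((θ k : ℂ) * Complex.I) with hzdef
  have hznorm : ∀ k, ‖z k‖ = 1 := fun k => by
    simp [hzdef, Complex.norm_exp]
  set G : ℕ → ℝ := fun n => (∑ k, Complex.exp ((n : ℂ) * (θ k : ℂ) * Complex.I) * f k).re
    with hGdef
  have hG : ∀ n : ℕ, G n = (∑ k, f k * z k ^ n).re := by
    intro n
    simp only [hGdef, hzdef]
    congr 1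
    refine Finset.sum_congr rfl fun k _ => ?_
    rw [mul_assoc, Complex.exp_nat_mul, mul_comm]
  -- the three nondegeneracy facts
  have key1 : ∀ k, z k ≠ 1 := by
    intro k hk
    rw [hzdef] at hk
    rw [exp_I_mul_eq_one_iff] at hk
    obtain ⟨m, hm⟩ := hk
    exact h₂ k ⟨2 * m, by push_cast; linarith⟩
  have key2 : ∀ j k, z j * z k ≠ 1 := by
    intro j k hjk
    rw [hzdef] at hjk
    simp only at hjk
    rw [exp_I_mul_add, exp_I_mul_eq_one_iff] at hjk
    obtain ⟨m, hm⟩ := hjk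
    by_cases hjk' : j = k
    · subst hjk'
      exact h₂ j ⟨m, by linarith⟩
    · exact (h₁ j k hjk').2 ⟨m, hm⟩
  have key3 : ∀ j k, j ≠ k → z j * (starRingEnd ℂ) (z k) ≠ 1 := by
    intro j k hjk h
    rw [hzdef] at h
    simp only at h
    rw [conj_exp_I_mul, exp_I_mul_add, exp_I_mul_eq_one_iff] at h
    obtain ⟨m, hm⟩ := h
    exact (h₁ j k hjk).1 ⟨m, by linarith⟩
  have key3' : ∀ k, z k * (starRingEnd ℂ) (z k) = 1 := by
    intro k
    rw [Complex.mul_conj]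
    norm_cast
    rw [← Complex.sq_norm]  -- normSq = abs^2
    simp [hznorm k]
  -- Cesàro limits
  have L1 : Tendsto (fun M : ℕ => (∑ n ∈ Finset.range M, ∑ k, f k * z k ^ n) / M) atTop
      (nhds 0) := by
    have := cesaro_sum Finset.univ f z (fun k _ => hznorm k)
    rw [Finset.sum_eq_zero fun k _ => if_neg (key1 k)] at this
    exact this
  have L2 : Tendsto (fun M : ℕ => (∑ n ∈ Finset.range M, (∑ k, f k * z k ^ n) ^ 2) / M) atTop
      (nhds 0) := by
    have hrw : ∀ n : ℕ, (∑ k, f k * z k ^ n) ^ 2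
        = ∑ p ∈ Finset.univ ×ˢ Finset.univ, (f p.1 * f p.2) * (z p.1 * z p.2) ^ n := by
      intro n
      rw [sq, Finset.sum_mul_sum, Finset.sum_product]
      refine Finset.sum_congr rfl fun j _ => Finset.sum_congr rfl fun k _ => ?_
      rw [mul_pow]; ring
    simp only [hrw]
    have := cesaro_sum (Finset.univ ×ˢ Finset.univ)
      (fun p : Fin N × Fin N => f p.1 * f p.2) (fun p => z p.1 * z p.2)
      (fun p _ => by rw [norm_mul, hznorm, hznorm, mul_one])
    rw [Finset.sum_eq_zero fun p _ => if_neg (key2 p.1 p.2)] at this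
    exact this
  have L3 : Tendsto (fun M : ℕ =>
      (∑ n ∈ Finset.range M, (∑ k, f k * z k ^ n) * (starRingEnd ℂ) (∑ k, f k * z k ^ n)) / M)
      atTop (nhds ((∑ k, (‖f k‖:ℝ)^2 : ℝ) : ℂ)) := by
    have hrw : ∀ n : ℕ, (∑ k, f k * z k ^ n) * (starRingEnd ℂ) (∑ k, f k * z k ^ n)
        = ∑ p ∈ Finset.univ ×ˢ Finset.univ,
          (f p.1 * (starRingEnd ℂ) (f p.2)) * (z p.1 * (starRingEnd ℂ) (z p.2)) ^ n := by
      intro n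
      rw [map_sum, Finset.sum_mul_sum, Finset.sum_product]
      refine Finset.sum_congr rfl fun j _ => Finset.sum_congr rfl fun k _ => ?_
      rw [map_mul, map_pow, mul_pow]; ring
    simp only [hrw]
    have hlim := cesaro_sum (Finset.univ ×ˢ Finset.univ)
      (fun p : Fin N × Fin N => f p.1 * (starRingEnd ℂ) (f p.2))
      (fun p => z p.1 * (starRingEnd ℂ) (z p.2))
      (fun p _ => by rw [norm_mul, hznorm, RCLike.norm_conj, hznorm, mul_one])
    have hval : (∑ p ∈ Finset.univ ×ˢ Finset.univ,
        if z p.1 * (starRingEnd ℂ) (z p.2) = 1 then f p.1 * (starRingEnd ℂ) (f p.2) else 0)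
        = ((∑ k, (‖f k‖:ℝ)^2 : ℝ) : ℂ) := by
      rw [Finset.sum_product]
      push_cast
      refine Finset.sum_congr rfl fun j _ => ?_
      rw [Finset.sum_eq_single j]
      · rw [if_pos (key3' j), Complex.mul_conj']
      · intro k _ hkj
        exact if_neg (key3 j k (fun h => hkj h.symm))
      · intro hj; exact absurd (Finset.mem_univ j) hj
    rw [← hval]
    exact hlim
  -- real averages
  set S : ℝ := ∑ k, ‖f k‖^2 with hSdef
  have tG : Tendsto (fun M : ℕ => (∑ n ∈ Finset.range M, G n) / M) atTop (nhds 0) := by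
    have hcomp := (Complex.continuous_re.tendsto 0).comp L1
    have heq : ∀ M : ℕ, ((∑ n ∈ Finset.range M, ∑ k, f k * z k ^ n) / M).re
        = (∑ n ∈ Finset.range M, G n) / M := by
      intro M
      rw [re_div_nat, Complex.re_sum]
      congr 1
      exact Finset.sum_congr rfl fun n _ => (hG n).symm
    have h' := hcomp.congr heq
    simpa using h'
  have tG2 : Tendsto (fun M : ℕ => (∑ n ∈ Finset.range M, (G n)^2) / M) atTop
      (nhds (S / 2)) := by
    have tC := L2.add L3
    have hcomp := (Complex.continuous_re.tendsto _).comp tC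
    have hcomp2 := hcomp.div_const 2
    have heq : ∀ M : ℕ,
        (((∑ n ∈ Finset.range M, (∑ k, f k * z k ^ n) ^ 2) / M +
          (∑ n ∈ Finset.range M,
            (∑ k, f k * z k ^ n) * (starRingEnd ℂ) (∑ k, f k * z k ^ n)) / M).re) / 2
        = (∑ n ∈ Finset.range M, (G n)^2) / M := by
      intro M
      rw [← add_div, ← Finset.sum_add_distrib, re_div_nat, Complex.re_sum, div_div,
        mul_comm (M:ℝ) 2, ← div_div, Finset.sum_div _ _ (2:ℝ)]
      congr 1
      refine Finset.sum_congr rfl fun n _ => ?_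
      rw [hG n, re_sq_eq_s13]
    have h' := hcomp2.congr heq
    simpa using h'
  -- bounds and positivity
  set B : ℝ := ∑ k, ‖f k‖ with hBdef
  have hB0 : 0 ≤ B := Finset.sum_nonneg fun k _ => norm_nonneg _
  have hBG : ∀ n : ℕ, |G n| ≤ B := by
    intro n
    rw [hG]
    calc |(∑ k, f k * z k ^ n).re| ≤ ‖∑ k, f k * z k ^ n‖ := Complex.abs_re_le_norm _
      _ ≤ ∑ k, ‖f k * z k ^ n‖ := norm_sum_le _ _
      _ = B := by
          refine Finset.sum_congr rfl fun k _ => ?_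
          rw [norm_mul, norm_pow, hznorm, one_pow, mul_one]
  have hfB : ∀ k, ‖f k‖ ≤ B :=
    fun k => Finset.single_le_sum (fun k _ => norm_nonneg (f k)) (Finset.mem_univ k)
  have hSB : S ≤ B^2 := by
    rw [hSdef, sq]
    calc ∑ k, ‖f k‖^2 ≤ ∑ k, ‖f k‖ * B := by
          refine Finset.sum_le_sum fun k _ => ?_
          rw [sq]
          exact mul_le_mul_of_nonneg_left (hfB k) (norm_nonneg _)
      _ = B * B := by rw [← Finset.sum_mul]
  have hS : 0 < S := by
    obtain ⟨k, hk⟩ := Function.ne_iff.mp hf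
    exact Finset.sum_pos' (fun k _ => sq_nonneg _)
      ⟨k, Finset.mem_univ k, pow_pos (norm_pos_iff.mpr hk) 2⟩
  obtain ⟨δ, hdeq, hd0⟩ : ∃ δ : ℝ, 16 * (B + 1) * δ = S ∧ 0 < δ :=
    ⟨S / (16 * (B + 1)),
      mul_div_cancel₀ S (ne_of_gt (by linarith : (0:ℝ) < 16 * (B + 1))),
      div_pos hS (by linarith)⟩
  have hdB : δ ≤ B := by nlinarith [hdeq, hSB, hB0, hd0.le, sq_nonneg B]
  have hc3 : 2 * B * δ ≤ S / 8 := by nlinarith [hdeq, hd0.le, hB0]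
  have claim := freq_pos G B S δ hB0 hS hd0 hdB hc3 hBG tG tG2
  -- conclusion
  intro Mb
  have htend := tendsto_pow_atTop_atTop_of_one_lt hr
  obtain ⟨n₀, hn₀⟩ := (htend.eventually_gt_atTop (Mb / δ)).exists
  obtain ⟨n, hn1, hn2⟩ := claim (max n₀ 1)
  refine ⟨n, le_trans (le_max_right _ _) hn1, ?_⟩
  have hrn : r ^ n₀ ≤ r ^ n :=
    pow_le_pow_right₀ (le_of_lt hr) (le_trans (le_max_left _ _) hn1)
  have hMb : Mb < r ^ n₀ * δ := (div_lt_iff₀ hd0).mp hn₀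
  calc Mb < r ^ n₀ * δ := hMb
    _ ≤ r ^ n * G n := mul_le_mul hrn hn2 hd0.le (pow_nonneg (by linarith) n)
end

section
/- If x₁, ..., x_n are distinct real numbers with x_k < −1 for all k, then for any real numbers y₁, ..., y_n there exists a convex-polynomial p with p(x_k) = y_k for all k. -/
/-- A real convex-polynomial: a convex combination of the monomials `1, x, x², …`. -/
def IsConvexPolyR (p : Polynomial ℝ) : Prop :=
  ∃ (n : ℕ) (a : ℕ → ℝ), (∀ k, 0 ≤ a k) ∧ (∑ k ∈ Finset.range (n + 1), a k) = 1 ∧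
    p = ∑ k ∈ Finset.range (n + 1), Polynomial.C (a k) * Polynomial.X ^ k

open Filter in
/-- If `x j` has the strictly largest absolute value among the support of `c`, and all `x k < -1`,
then the sums `∑ c k * x k ^ m` are unbounded above. -/
lemma exists_pow_sum_gt {n : ℕ} (x : Fin n → ℝ) (hinj : Function.Injective x)
    (hlt : ∀ k, x k < -1) (c : Fin n → ℝ) (j : Fin n) (hcj : c j ≠ 0)
    (hmax : ∀ k, c k ≠ 0 → |x k| ≤ |x j|) (B : ℝ) :
    ∃ m : ℕ, B < ∑ k, c k * x k ^ m := by
  classical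
  set q : ℝ := |x j| with hqdef
  have hxjneg : x j < 0 := lt_trans (hlt j) (by norm_num)
  have hq1 : 1 < q := by
    rw [hqdef, abs_of_neg hxjneg]; linarith [hlt j]
  have hq0 : (0:ℝ) < q := by linarith
  have hxj : x j = -q := by rw [hqdef, abs_of_neg hxjneg]; ring
  set f : Fin n → ℝ := fun k => if k = j ∨ c k = 0 then 0 else |x k| with hfdef
  have hne : (Finset.univ : Finset (Fin n)).Nonempty := ⟨j, Finset.mem_univ j⟩
  set r : ℝ := Finset.univ.sup' hne f with hrdef
  have hqx : q = -x j := by rw [hqdef, abs_of_neg hxjneg]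
  have hr0 : 0 ≤ r := by
    have h := Finset.le_sup' f (Finset.mem_univ j)
    have hfj : f j = 0 := by simp [hfdef]
    rw [hfj] at h
    rw [hrdef]; exact h
  have hrq : r < q := by
    rw [hrdef, Finset.sup'_lt_iff]
    intro k _
    simp only [hfdef]
    by_cases h : k = j ∨ c k = 0
    · rw [if_pos h]; linarith
    · rw [if_neg h]
      push_neg at h
      rcases lt_or_eq_of_le (hmax k h.2) with h' | h'
      · exact h'
      · exfalso
        have hk : x k < 0 := lt_trans (hlt k) (by norm_num)
        rw [abs_of_neg hk] at h'
        exact h.1 (hinj (by linarith))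
  have hbound : ∀ k, k ≠ j → c k ≠ 0 → |x k| ≤ r := by
    intro k hk hck
    have h := Finset.le_sup' f (Finset.mem_univ k)
    have hfk : f k = |x k| := by simp [hfdef, hk, hck]
    rw [hfk] at h
    rw [hrdef]; exact h
  set S : ℝ := ∑ k, |c k| with hSdef
  have hS0 : 0 ≤ S := Finset.sum_nonneg fun k _ => abs_nonneg _
  -- choose parity
  set ε : ℕ := if 0 < c j then 0 else 1 with hεdef
  have hsign : ∀ t : ℕ, c j * x j ^ (2*t+ε) = |c j| * q ^ (2*t+ε) := by
    intro t
    have hx : x j ^ (2*t+ε) = (-1:ℝ)^ε * q ^ (2*t+ε) := by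
      rw [hxj, neg_pow]
      have h1 : (-1:ℝ) ^ (2*t+ε) = (-1:ℝ)^ε := by
        rw [pow_add, pow_mul]; norm_num
      rw [h1]
    rw [hx]
    by_cases h : 0 < c j
    · simp only [hεdef, if_pos h, pow_zero, one_mul]
      rw [abs_of_pos h]
    · have hneg : c j < 0 := lt_of_le_of_ne (not_lt.mp h) hcj
      simp only [hεdef, if_neg h, pow_one]
      rw [abs_of_neg hneg]; ring
  -- unbounded growth of |c j| q^m - S r^m
  have hT : Tendsto (fun m : ℕ => |c j| * q ^ m - S * r ^ m) atTop atTop := by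
    have h1 : Tendsto (fun m : ℕ => (q:ℝ) ^ m) atTop atTop :=
      tendsto_pow_atTop_atTop_of_one_lt hq1
    have h2 : Tendsto (fun m : ℕ => |c j| - S * (r/q) ^ m) atTop (nhds (|c j| - S * 0)) := by
      exact tendsto_const_nhds.sub (tendsto_const_nhds.mul
        (tendsto_pow_atTop_nhds_zero_of_lt_one (div_nonneg hr0 hq0.le)
          ((div_lt_one hq0).mpr hrq)))
    have hpos : 0 < |c j| - S * 0 := by simpa using abs_pos.mpr hcj
    have := h1.atTop_mul_pos hpos h2
    refine this.congr fun m => ?_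
    have hqm : (q:ℝ)^m ≠ 0 := (pow_pos hq0 m).ne'
    field_simp
    have hqr : q ^ m * (r ^ m / q ^ m) = r ^ m := by field_simp
    rw [div_pow]; linear_combination (-S) * hqr
  obtain ⟨M, hM⟩ := eventually_atTop.mp (hT.eventually_gt_atTop B)
  refine ⟨2*M+ε, ?_⟩
  have hMle : M ≤ 2*M+ε := by omega
  have hB : B < |c j| * q ^ (2*M+ε) - S * r ^ (2*M+ε) := hM _ hMle
  set m : ℕ := 2*M+ε
  have hsplit : ∑ k, c k * x k ^ m = c j * x j ^ m + ∑ k ∈ Finset.univ.erase j, c k * x k ^ m :=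
    (Finset.add_sum_erase _ _ (Finset.mem_univ j)).symm
  have hrest : -(S * r ^ m) ≤ ∑ k ∈ Finset.univ.erase j, c k * x k ^ m := by
    have hterm : ∀ k ∈ Finset.univ.erase j, -(|c k| * r ^ m) ≤ c k * x k ^ m := by
      intro k hk
      have hkj : k ≠ j := (Finset.mem_erase.mp hk).1
      by_cases hck : c k = 0
      · simp [hck]
      · have habs : |c k * x k ^ m| ≤ |c k| * r ^ m := by
          rw [abs_mul, abs_pow]
          exact mul_le_mul_of_nonneg_left
            (pow_le_pow_left₀ (abs_nonneg _) (hbound k hkj hck) m) (abs_nonneg _)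
        linarith [neg_abs_le (c k * x k ^ m)]
    calc -(S * r ^ m) ≤ -(∑ k ∈ Finset.univ.erase j, |c k| * r ^ m) := by
          rw [neg_le_neg_iff]
          have : ∑ k ∈ Finset.univ.erase j, |c k| * r ^ m ≤ ∑ k, |c k| * r ^ m :=
            Finset.sum_le_sum_of_subset_of_nonneg (Finset.subset_univ _)
              (fun k _ _ => mul_nonneg (abs_nonneg _) (pow_nonneg hr0 _))
          calc ∑ k ∈ Finset.univ.erase j, |c k| * r ^ m ≤ ∑ k, |c k| * r ^ m := this
            _ = S * r ^ m := by rw [hSdef, Finset.sum_mul]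
      _ ≤ ∑ k ∈ Finset.univ.erase j, c k * x k ^ m := by
          rw [← Finset.sum_neg_distrib]
          exact Finset.sum_le_sum hterm
  rw [hsplit]
  have := hsign M
  calc B < |c j| * q ^ m - S * r ^ m := hB
    _ ≤ c j * x j ^ m + ∑ k ∈ Finset.univ.erase j, c k * x k ^ m := by
        rw [this]; linarith

/-- Interpolation of prescribed real values by a convex-polynomial. -/
theorem convexPoly_interpolation_real {n : ℕ} (x : Fin n → ℝ)
    (hdist : Function.Injective x)
    (hlt : ∀ k, x k < -1)
    (y : Fin n → ℝ) :
    ∃ p, IsConvexPolyR p ∧ ∀ k, p.eval (x k) = y k := by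
  classical
  set v : ℕ → (Fin n → ℝ) := fun m k => x k ^ m with hv
  set s : Set (Fin n → ℝ) := convexHull ℝ (Set.range v) with hs
  have hconv : Convex ℝ s := convex_convexHull _ _
  -- Step 1: s is dense
  have hdense : closure s = Set.univ := by
    by_contra h
    obtain ⟨z, hz⟩ := Set.ne_univ_iff_exists_notMem _ |>.mp h
    obtain ⟨f, u, hfs, hfz⟩ :=
      geometric_hahn_banach_closed_point hconv.closure isClosed_closure hz
    set c : Fin n → ℝ := fun k => f (fun j => if k = j then 1 else 0) with hc
    have hf : ∀ w : Fin n → ℝ, f w = ∑ k, w k * c k := by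
      intro w
      conv_lhs => rw [pi_eq_sum_univ w]
      rw [map_sum]
      simp [hc, smul_eq_mul]
    have hvm : ∀ m, f (v m) < u := fun m =>
      hfs _ (subset_closure (subset_convexHull _ _ ⟨m, rfl⟩))
    by_cases hc0 : c = 0
    · have h0 : f (v 0) = 0 := by rw [hf]; simp [hc0]
      have hz0 : f z = 0 := by rw [hf]; simp [hc0]
      have := hvm 0
      rw [h0] at this; rw [hz0] at hfz; linarith
    · obtain ⟨k₀, hk₀⟩ := Function.ne_iff.mp hc0
      have hne : (Finset.univ.filter (fun k => c k ≠ 0)).Nonempty :=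
        ⟨k₀, by simp only [Finset.mem_filter, Finset.mem_univ, true_and]; simpa using hk₀⟩
      obtain ⟨j, hjmem, hjmax⟩ :=
        Finset.exists_max_image (Finset.univ.filter (fun k => c k ≠ 0)) (fun k => |x k|) hne
      have hcj : c j ≠ 0 := (Finset.mem_filter.mp hjmem).2
      obtain ⟨m, hm⟩ := exists_pow_sum_gt x hdist hlt c j hcj
        (fun k hck => hjmax k (by simp [hck])) u
      have hfv : f (v m) = ∑ k, c k * x k ^ m := by
        rw [hf]
        exact Finset.sum_congr rfl fun k _ => by rw [mul_comm]
      have := hvm m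
      rw [hfv] at this
      linarith
  -- Step 2: a dense convex set in a finite-dimensional space is everything
  have hy : y ∈ s := by
    have hspan : affineSpan ℝ s = ⊤ := by
      have hclosed : IsClosed ((affineSpan ℝ s : AffineSubspace ℝ (Fin n → ℝ)) : Set (Fin n → ℝ)) :=
        AffineSubspace.closed_of_finiteDimensional _
      have hsub : closure s ⊆ (affineSpan ℝ s : Set (Fin n → ℝ)) :=
        closure_minimal (subset_affineSpan _ _) hclosed
      rw [hdense] at hsub
      rw [← AffineSubspace.coe_eq_univ_iff]
      exact Set.eq_univ_of_univ_subset hsub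
    obtain ⟨w, hw⟩ := hconv.interior_nonempty_iff_affineSpan_eq_top.mpr hspan
    have hz' : (2:ℝ) • y - w ∈ closure s := by rw [hdense]; trivial
    have hcomb : (1/2:ℝ) • w + (1/2:ℝ) • ((2:ℝ) • y - w) ∈ interior s :=
      hconv.combo_interior_closure_mem_interior hw hz' (by norm_num) (by norm_num) (by norm_num)
    have heq : (1/2:ℝ) • w + (1/2:ℝ) • ((2:ℝ) • y - w) = y := by
      module
    rw [heq] at hcomb
    exact interior_subset hcomb
  -- Step 3: extract a convex combination and build the polynomial
  rw [hs, convexHull_eq] at hy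
  obtain ⟨ι, t, w, g, hw0, hw1, hgs, hcm⟩ := hy
  rw [Finset.centerMass_eq_of_sum_1 _ _ hw1] at hcm
  have hmex : ∀ i ∈ t, ∃ mi : ℕ, v mi = g i := fun i hi => hgs i hi
  set m : ι → ℕ := fun i => if h : ∃ mi : ℕ, v mi = g i then h.choose else 0 with hmdef
  have hmspec : ∀ i ∈ t, v (m i) = g i := by
    intro i hi
    have h := hmex i hi
    simp only [hmdef, dif_pos h]
    exact h.choose_spec
  set p : Polynomial ℝ := ∑ i ∈ t, Polynomial.C (w i) * Polynomial.X ^ (m i) with hp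
  have heval : ∀ r : ℝ, p.eval r = ∑ i ∈ t, w i * r ^ (m i) := by
    intro r
    rw [hp, Polynomial.eval_finset_sum]
    simp
  have hevalx : ∀ k, p.eval (x k) = y k := by
    intro k
    rw [heval]
    have : ∑ i ∈ t, w i * x k ^ (m i) = ∑ i ∈ t, (w i • g i) k := by
      refine Finset.sum_congr rfl fun i hi => ?_
      rw [← hmspec i hi]
      simp [hv, smul_eq_mul]
    rw [this, ← Finset.sum_apply, hcm]
  have hcoeff : ∀ k, 0 ≤ p.coeff k := by
    intro k
    rw [hp, Polynomial.finset_sum_coeff]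
    refine Finset.sum_nonneg fun i hi => ?_
    rw [Polynomial.coeff_C_mul, Polynomial.coeff_X_pow]
    rcases eq_or_ne k (m i) with h | h
    · rw [if_pos h, mul_one]; exact hw0 i hi
    · rw [if_neg h, mul_zero]
  have heval1 : p.eval 1 = 1 := by rw [heval]; simpa using hw1
  refine ⟨p, ⟨p.natDegree, p.coeff, hcoeff, ?_, ?_⟩, hevalx⟩
  · have h1 : (∑ k ∈ Finset.range (p.natDegree + 1), p.coeff k) = p.eval 1 := by
      rw [Polynomial.eval_eq_sum_range]
      exact Finset.sum_congr rfl fun i _ => by simp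
    rw [h1, heval1]
  · exact p.as_sum_range_C_mul_X_pow
end
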